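/- arXiv:1106.4642 — 5 statements merged into one kernel-verified Lean document; each statement's English description precedes it below -/
import Mathlib

section
/- Let a ∈ ℕ with a ≥ 1 and let μ ∈ C¹(B₁(0)\{0}, ℝ) satisfy c₁|x|^a ≤ |μ(x)| ≤ c₂|x|^a for some 0 < c₁ ≤ c₂ and |∇μ(x)| ≤ C_μ |x|^{a−1} for all 0 < |x| < 1. Then there exists a constant C' (depending only on a, c₁, c₂, C_μ) such that for every x with 0 < |x| < 1 and every nonnegative measurable function f on B₁(0): ∫_{B₁(0) ∩ B_{2|x|}(0)} |x−y|^{−2} f(y) |μ(y) − μ(x)| dy ≤ C' |μ(x)| ( |x|^{−2} ∫_{B₁(0) ∩ B_{2|x|}(0)} f(y) dy + |x|^{−1} ∫_{B₁(0) ∩ B_{2|x|}(0)} f(y)/|x−y| dy ). -/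
open MeasureTheory Metric Complex

set_option maxHeartbeats 1000000 in
theorem stmt8 (a : ℕ) (ha : 1 ≤ a) (c₁ c₂ Cμ : ℝ) (hc₁ : 0 < c₁) (hc₁₂ : c₁ ≤ c₂)
    (hCμ : 0 < Cμ) :
    ∃ C' : ℝ, 0 < C' ∧
      ∀ μ : ℂ → ℝ,
        ContDiffOn ℝ 1 μ (ball (0 : ℂ) 1 \ {0}) →
        (∀ x : ℂ, x ≠ 0 → ‖x‖ < 1 → c₁ * ‖x‖ ^ a ≤ |μ x| ∧ |μ x| ≤ c₂ * ‖x‖ ^ a) →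
        (∀ x : ℂ, x ≠ 0 → ‖x‖ < 1 → ‖fderiv ℝ μ x‖ ≤ Cμ * ‖x‖ ^ (a - 1)) →
        ∀ x : ℂ, x ≠ 0 → ‖x‖ < 1 →
          ∀ g : ℂ → ENNReal, Measurable g →
            (∫⁻ y in ball (0 : ℂ) 1 ∩ ball (0 : ℂ) (2 * ‖x‖),
                ENNReal.ofReal (|μ y - μ x| / ‖x - y‖ ^ 2) * g y)
              ≤ ENNReal.ofReal (C' * |μ x| / ‖x‖ ^ 2) *
                  (∫⁻ y in ball (0 : ℂ) 1 ∩ ball (0 : ℂ) (2 * ‖x‖), g y)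
                + ENNReal.ofReal (C' * |μ x| / ‖x‖) *
                  (∫⁻ y in ball (0 : ℂ) 1 ∩ ball (0 : ℂ) (2 * ‖x‖),
                    g y / ENNReal.ofReal ‖x - y‖) := by
  obtain ⟨m, rfl⟩ : ∃ m, a = m + 1 := ⟨a - 1, (Nat.succ_pred_eq_of_pos ha).symm⟩
  have hc₂ : 0 < c₂ := lt_of_lt_of_le hc₁ hc₁₂
  obtain ⟨K, hK, hKpos⟩ : ∃ K : ℝ,
      K = 16 * c₂ * (2 ^ (m + 1) + 1) + Cμ * 2 ^ (m + 1) + 1 ∧ 0 < K :=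
    ⟨_, rfl, by positivity⟩
  refine ⟨K / c₁, by positivity, ?_⟩
  intro μ hμ hbnd hgrad x hx0 hx1 g hg
  have hXpos : 0 < ‖x‖ := norm_pos_iff.mpr hx0
  have hM := hbnd x hx0 hx1
  have hMpos : 0 < |μ x| := lt_of_lt_of_le (by positivity) hM.1
  have hC'M : K * ‖x‖ ^ (m + 1) ≤ K / c₁ * |μ x| := by
    have h1 : K / c₁ * (c₁ * ‖x‖ ^ (m + 1)) = K * ‖x‖ ^ (m + 1) := by
      field_simp
    calc K * ‖x‖ ^ (m + 1) = K / c₁ * (c₁ * ‖x‖ ^ (m + 1)) := h1.symm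
      _ ≤ K / c₁ * |μ x| := mul_le_mul_of_nonneg_left hM.1 (by positivity)
  -- key real inequality
  have key : ∀ y : ℂ, y ≠ 0 → ‖y‖ < 1 → ‖y‖ < 2 * ‖x‖ → y ≠ x →
      |μ y - μ x| ≤ K / c₁ * |μ x| * ‖x - y‖ ^ 2 / ‖x‖ ^ 2
        + K / c₁ * |μ x| * ‖x - y‖ / ‖x‖ := by
    intro y hy0 hy1 hy2 hyx
    have hr : 0 < ‖x - y‖ := norm_pos_iff.mpr (sub_ne_zero.mpr (Ne.symm hyx))
    rcases le_or_gt (‖x‖ / 4) ‖x - y‖ with hcase | hcase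
    · -- far case
      have hμy := hbnd y hy0 hy1
      have hyp : ‖y‖ ^ (m + 1) ≤ 2 ^ (m + 1) * ‖x‖ ^ (m + 1) := by
        calc ‖y‖ ^ (m + 1) ≤ (2 * ‖x‖) ^ (m + 1) :=
              pow_le_pow_left₀ (norm_nonneg y) hy2.le _
          _ = 2 ^ (m + 1) * ‖x‖ ^ (m + 1) := mul_pow _ _ _
      have hy' : |μ y| ≤ c₂ * (2 ^ (m + 1) * ‖x‖ ^ (m + 1)) :=
        le_trans hμy.2 (mul_le_mul_of_nonneg_left hyp hc₂.le)
      have h1 : |μ y - μ x| ≤ |μ y| + |μ x| := abs_sub _ _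
      have hexp : c₂ * (2 ^ (m + 1) + 1) * ‖x‖ ^ (m + 1)
          = c₂ * (2 ^ (m + 1) * ‖x‖ ^ (m + 1)) + c₂ * ‖x‖ ^ (m + 1) := by ring
      have hD : |μ y - μ x| ≤ c₂ * (2 ^ (m + 1) + 1) * ‖x‖ ^ (m + 1) := by
        linarith [hM.2]
      have hX16 : ‖x‖ ^ 2 ≤ 16 * ‖x - y‖ ^ 2 := by nlinarith
      have hK1 : 16 * c₂ * (2 ^ (m + 1) + 1) ≤ K := by
        have h2m : (0:ℝ) < Cμ * 2 ^ (m + 1) := by positivity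
        linarith
      have h2 : |μ y - μ x| ≤ K / c₁ * |μ x| * ‖x - y‖ ^ 2 / ‖x‖ ^ 2 := by
        rw [le_div_iff₀ (by positivity)]
        calc |μ y - μ x| * ‖x‖ ^ 2
            ≤ (c₂ * (2 ^ (m + 1) + 1) * ‖x‖ ^ (m + 1)) * ‖x‖ ^ 2 :=
              mul_le_mul_of_nonneg_right hD (by positivity)
          _ ≤ (c₂ * (2 ^ (m + 1) + 1) * ‖x‖ ^ (m + 1)) * (16 * ‖x - y‖ ^ 2) :=
              mul_le_mul_of_nonneg_left hX16 (by positivity)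
          _ = (16 * c₂ * (2 ^ (m + 1) + 1)) * ‖x‖ ^ (m + 1) * ‖x - y‖ ^ 2 := by ring
          _ ≤ K * ‖x‖ ^ (m + 1) * ‖x - y‖ ^ 2 :=
              mul_le_mul_of_nonneg_right
                (mul_le_mul_of_nonneg_right hK1 (by positivity)) (by positivity)
          _ ≤ K / c₁ * |μ x| * ‖x - y‖ ^ 2 :=
              mul_le_mul_of_nonneg_right hC'M (by positivity)
      have h3 : 0 ≤ K / c₁ * |μ x| * ‖x - y‖ / ‖x‖ := by positivity
      linarith
    · -- near case : mean value inequality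
      have hopen : IsOpen (ball (0 : ℂ) 1 \ {0}) := isOpen_ball.sdiff isClosed_singleton
      have hs' : ∀ z ∈ closedBall x (‖x‖ / 4) ∩ ball (0 : ℂ) 1,
          z ∈ ball (0 : ℂ) 1 \ {0} := by
        intro z hz
        have h1 : dist z x ≤ ‖x‖ / 4 := mem_closedBall.mp hz.1
        have h3 : ‖x‖ - ‖z‖ ≤ ‖x - z‖ := norm_sub_norm_le x z
        have h4 : ‖x - z‖ = dist z x := by rw [dist_comm, dist_eq_norm]
        have hz3 : 0 < ‖z‖ := by rw [h4] at h3; linarith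
        exact ⟨hz.2, by simpa using norm_pos_iff.mp hz3⟩
      have hdiff : ∀ z ∈ closedBall x (‖x‖ / 4) ∩ ball (0 : ℂ) 1,
          DifferentiableAt ℝ μ z := fun z hz =>
        (hμ.contDiffAt (hopen.mem_nhds (hs' z hz))).differentiableAt one_ne_zero
      have hbd : ∀ z ∈ closedBall x (‖x‖ / 4) ∩ ball (0 : ℂ) 1,
          ‖fderiv ℝ μ z‖ ≤ Cμ * (2 * ‖x‖) ^ m := by
        intro z hz
        obtain ⟨hz1, hz2⟩ := hs' z hz
        have h5 := hgrad z (by simpa using hz2) (mem_ball_zero_iff.mp hz1)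
        have hz2X : ‖z‖ ≤ 2 * ‖x‖ := by
          have h6 : ‖z‖ - ‖x‖ ≤ ‖z - x‖ := norm_sub_norm_le z x
          have h7 : ‖z - x‖ = dist z x := (dist_eq_norm z x).symm
          have h8 : dist z x ≤ ‖x‖ / 4 := mem_closedBall.mp hz.1
          rw [h7] at h6
          linarith
        calc ‖fderiv ℝ μ z‖ ≤ Cμ * ‖z‖ ^ (m + 1 - 1) := h5
          _ = Cμ * ‖z‖ ^ m := by norm_num
          _ ≤ Cμ * (2 * ‖x‖) ^ m :=
              mul_le_mul_of_nonneg_left (pow_le_pow_left₀ (norm_nonneg z) hz2X m) hCμ.le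
      have hxmem : x ∈ closedBall x (‖x‖ / 4) ∩ ball (0 : ℂ) 1 :=
        ⟨mem_closedBall_self (by positivity), mem_ball_zero_iff.mpr hx1⟩
      have hymem : y ∈ closedBall x (‖x‖ / 4) ∩ ball (0 : ℂ) 1 := by
        refine ⟨mem_closedBall.mpr ?_, mem_ball_zero_iff.mpr hy1⟩
        rw [dist_eq_norm, ← norm_sub_rev]
        exact hcase.le
      have hmvt :=
        ((convex_closedBall x (‖x‖ / 4)).inter
          (convex_ball 0 1)).norm_image_sub_le_of_norm_fderiv_le hdiff hbd hxmem hymem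
      have h6 : |μ y - μ x| ≤ Cμ * (2 * ‖x‖) ^ m * ‖x - y‖ := by
        rw [← Real.norm_eq_abs]
        calc ‖μ y - μ x‖ ≤ Cμ * (2 * ‖x‖) ^ m * ‖y - x‖ := hmvt
          _ = Cμ * (2 * ‖x‖) ^ m * ‖x - y‖ := by rw [norm_sub_rev]
      have hCK : Cμ * 2 ^ m ≤ K := by
        have hp : (2:ℝ) ^ (m + 1) = 2 ^ m * 2 := pow_succ 2 m
        have h2m : (0:ℝ) ≤ Cμ * 2 ^ m := by positivity
        have hA : (0:ℝ) ≤ 16 * c₂ * (2 ^ (m + 1) + 1) := by positivity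
        nlinarith
      have h7 : Cμ * (2 * ‖x‖) ^ m * ‖x - y‖ ≤ K / c₁ * |μ x| * ‖x - y‖ / ‖x‖ := by
        rw [le_div_iff₀ hXpos]
        calc Cμ * (2 * ‖x‖) ^ m * ‖x - y‖ * ‖x‖
            = (Cμ * 2 ^ m) * ‖x‖ ^ (m + 1) * ‖x - y‖ := by rw [mul_pow]; ring
          _ ≤ K * ‖x‖ ^ (m + 1) * ‖x - y‖ :=
              mul_le_mul_of_nonneg_right
                (mul_le_mul_of_nonneg_right hCK (by positivity)) hr.le
          _ ≤ K / c₁ * |μ x| * ‖x - y‖ := mul_le_mul_of_nonneg_right hC'M hr.le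
      have h8 : 0 ≤ K / c₁ * |μ x| * ‖x - y‖ ^ 2 / ‖x‖ ^ 2 := by positivity
      linarith
  -- pointwise ENNReal inequality
  have pointwise : ∀ y : ℂ, y ≠ 0 → y ∈ ball (0 : ℂ) 1 ∩ ball (0 : ℂ) (2 * ‖x‖) →
      ENNReal.ofReal (|μ y - μ x| / ‖x - y‖ ^ 2) * g y ≤
        ENNReal.ofReal (K / c₁ * |μ x| / ‖x‖ ^ 2) * g y +
          ENNReal.ofReal (K / c₁ * |μ x| / ‖x‖) * (g y / ENNReal.ofReal ‖x - y‖) := by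
    intro y hy0 hy
    by_cases hyx : y = x
    · subst hyx
      simp [sub_self]
    · have hr : 0 < ‖x - y‖ := norm_pos_iff.mpr (sub_ne_zero.mpr (Ne.symm hyx))
      have hk := key y hy0 (mem_ball_zero_iff.mp hy.1) (mem_ball_zero_iff.mp hy.2) hyx
      have hdiv : |μ y - μ x| / ‖x - y‖ ^ 2 ≤
          K / c₁ * |μ x| / ‖x‖ ^ 2 + K / c₁ * |μ x| / (‖x‖ * ‖x - y‖) := by
        have habs : ∀ A Z R : ℝ, Z ≠ 0 → R ≠ 0 →
            (A * R ^ 2 / Z ^ 2 + A * R / Z) / R ^ 2 = A / Z ^ 2 + A / (Z * R) := by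
          intro A Z R hZ hR
          field_simp
        have h2 : (K / c₁ * |μ x| * ‖x - y‖ ^ 2 / ‖x‖ ^ 2
              + K / c₁ * |μ x| * ‖x - y‖ / ‖x‖) / ‖x - y‖ ^ 2
            = K / c₁ * |μ x| / ‖x‖ ^ 2 + K / c₁ * |μ x| / (‖x‖ * ‖x - y‖) :=
          habs _ _ _ (ne_of_gt hXpos) (ne_of_gt hr)
        rw [← h2]
        gcongr
      calc ENNReal.ofReal (|μ y - μ x| / ‖x - y‖ ^ 2) * g y
          ≤ ENNReal.ofReal (K / c₁ * |μ x| / ‖x‖ ^ 2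
              + K / c₁ * |μ x| / (‖x‖ * ‖x - y‖)) * g y :=
            mul_le_mul_left (ENNReal.ofReal_le_ofReal hdiv) _
        _ = (ENNReal.ofReal (K / c₁ * |μ x| / ‖x‖ ^ 2) +
              ENNReal.ofReal (K / c₁ * |μ x| / (‖x‖ * ‖x - y‖))) * g y := by
            rw [ENNReal.ofReal_add (by positivity) (by positivity)]
        _ = ENNReal.ofReal (K / c₁ * |μ x| / ‖x‖ ^ 2) * g y +
              ENNReal.ofReal (K / c₁ * |μ x| / (‖x‖ * ‖x - y‖)) * g y := by
            rw [add_mul]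
        _ = ENNReal.ofReal (K / c₁ * |μ x| / ‖x‖ ^ 2) * g y +
              ENNReal.ofReal (K / c₁ * |μ x| / ‖x‖) * (g y / ENNReal.ofReal ‖x - y‖) := by
            congr 1
            rw [show K / c₁ * |μ x| / (‖x‖ * ‖x - y‖)
                = (K / c₁ * |μ x| / ‖x‖) * ‖x - y‖⁻¹ by rw [← div_div, div_eq_mul_inv]]
            rw [ENNReal.ofReal_mul (by positivity), ENNReal.ofReal_inv_of_pos hr,
              ENNReal.div_eq_inv_mul]
            ring
  -- integrate
  have hdm : Measurable fun y => g y / ENNReal.ofReal ‖x - y‖ :=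
    hg.div ((measurable_const.sub measurable_id).norm.ennreal_ofReal)
  have hne : ∀ᵐ y : ℂ ∂volume, y ≠ 0 := by
    rw [ae_iff]
    simp only [ne_eq, not_not, Set.setOf_eq_eq_singleton]
    exact measure_singleton 0
  have h_ae : ∀ᵐ y ∂(volume.restrict (ball (0 : ℂ) 1 ∩ ball (0 : ℂ) (2 * ‖x‖))),
      ENNReal.ofReal (|μ y - μ x| / ‖x - y‖ ^ 2) * g y ≤
        ENNReal.ofReal (K / c₁ * |μ x| / ‖x‖ ^ 2) * g y +
          ENNReal.ofReal (K / c₁ * |μ x| / ‖x‖) * (g y / ENNReal.ofReal ‖x - y‖) := by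
    filter_upwards [ae_restrict_mem (measurableSet_ball.inter measurableSet_ball),
      ae_restrict_of_ae hne] with y hy hy0
    exact pointwise y hy0 hy
  calc (∫⁻ y in ball (0 : ℂ) 1 ∩ ball (0 : ℂ) (2 * ‖x‖),
          ENNReal.ofReal (|μ y - μ x| / ‖x - y‖ ^ 2) * g y)
      ≤ ∫⁻ y in ball (0 : ℂ) 1 ∩ ball (0 : ℂ) (2 * ‖x‖),
          (ENNReal.ofReal (K / c₁ * |μ x| / ‖x‖ ^ 2) * g y +
            ENNReal.ofReal (K / c₁ * |μ x| / ‖x‖) * (g y / ENNReal.ofReal ‖x - y‖)) :=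
        lintegral_mono_ae h_ae
    _ = ENNReal.ofReal (K / c₁ * |μ x| / ‖x‖ ^ 2) *
          (∫⁻ y in ball (0 : ℂ) 1 ∩ ball (0 : ℂ) (2 * ‖x‖), g y) +
        ENNReal.ofReal (K / c₁ * |μ x| / ‖x‖) *
          (∫⁻ y in ball (0 : ℂ) 1 ∩ ball (0 : ℂ) (2 * ‖x‖),
            g y / ENNReal.ofReal ‖x - y‖) := by
        rw [lintegral_add_left (hg.const_mul _), lintegral_const_mul _ hg,
          lintegral_const_mul _ hdm]
end

section
/- Let m ≥ 2 and θ₀ ∈ ℕ with θ₀ ≥ 1. Let Φ : B₁(0)\{0} → ℝ^m be a C¹ conformal map, i.e. ∂₁Φ(x)·∂₂Φ(x) = 0 and |∂₁Φ(x)| = |∂₂Φ(x)| =: e^{λ(x)} for all x. Suppose there are A = A¹ + iA² ∈ ℂ^m (with A¹, A² ∈ ℝ^m), a map T : B₁(0)\{0} → ℂ^m with T(x) → 0 as x → 0, and a constant c ∈ (0,∞) with e^{λ(x)}/|x|^{θ₀−1} → c as x → 0, such that ∂₁Φ(x) − i ∂₂Φ(x) = θ₀ A x^{θ₀−1} + e^{λ(x)}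 T(x) for all x ∈ B₁(0)\{0} (identifying x ∈ ℝ² with a complex number). Then A¹ · A² = 0 and |A¹| = |A²| = c/θ₀. -/
open MeasureTheory Metric Complex Filter

open Topology

/-- `∂₁Φ` applied to the `k`-th component, for `Φ : ℂ → ℝ^m`. -/
noncomputable def p1 {m : ℕ} (Φ : ℂ → (Fin m → ℝ)) (x : ℂ) (k : Fin m) : ℝ :=
  fderiv ℝ (fun y => Φ y k) x 1

/-- `∂₂Φ` applied to the `k`-th component, for `Φ : ℂ → ℝ^m`. -/
noncomputable def p2 {m : ℕ} (Φ : ℂ → (Fin m → ℝ)) (x : ℂ) (k : Fin m) : ℝ :=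
  fderiv ℝ (fun y => Φ y k) x Complex.I

/-- The conformal factor `e^{λ(x)} = |∂₁Φ(x)|` (Euclidean norm). -/
noncomputable def eLam {m : ℕ} (Φ : ℂ → (Fin m → ℝ)) (x : ℂ) : ℝ :=
  Real.sqrt (∑ k, (p1 Φ x k) ^ 2)

theorem stmt10 (m : ℕ) (hm : 2 ≤ m) (θ₀ : ℕ) (hθ : 1 ≤ θ₀)
    (Φ : ℂ → (Fin m → ℝ))
    (hΦ : ContDiffOn ℝ 1 Φ (ball (0 : ℂ) 1 \ {0}))
    (hconf : ∀ x ∈ ball (0 : ℂ) 1 \ {0},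
      (∑ k, p1 Φ x k * p2 Φ x k) = 0 ∧
      Real.sqrt (∑ k, (p1 Φ x k) ^ 2) = Real.sqrt (∑ k, (p2 Φ x k) ^ 2))
    (A1 A2 : Fin m → ℝ) (T : ℂ → Fin m → ℂ)
    (hT : Tendsto T (nhdsWithin 0 (ball (0 : ℂ) 1 \ {0})) (nhds 0))
    (c : ℝ) (hc : 0 < c)
    (hlim : Tendsto (fun x : ℂ => eLam Φ x / ‖x‖ ^ (θ₀ - 1))
      (nhdsWithin 0 (ball (0 : ℂ) 1 \ {0})) (nhds c))
    (hexp : ∀ x ∈ ball (0 : ℂ) 1 \ {0}, ∀ k : Fin m,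
      (p1 Φ x k : ℂ) - Complex.I * (p2 Φ x k : ℂ)
        = (θ₀ : ℂ) * ((A1 k : ℂ) + Complex.I * (A2 k : ℂ)) * x ^ (θ₀ - 1)
          + (eLam Φ x : ℂ) * T x k) :
    (∑ k, A1 k * A2 k) = 0 ∧
    Real.sqrt (∑ k, (A1 k) ^ 2) = c / θ₀ ∧
    Real.sqrt (∑ k, (A2 k) ^ 2) = c / θ₀ := by
  set n := θ₀ - 1 with hn
  set S : Set ℂ := ball (0 : ℂ) 1 \ {0} with hS
  set l : Filter ℂ := nhdsWithin 0 S with hldef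
  have hθR : (0:ℝ) < (θ₀:ℝ) := by exact_mod_cast hθ
  have hθne : (θ₀:ℝ) ≠ 0 := ne_of_gt hθR
  -- the filter is nontrivial
  have hlne : l.NeBot := by
    have h : l = 𝓝[≠] (0:ℂ) := by
      rw [hldef, hS, Set.diff_eq]
      exact nhdsWithin_inter_of_mem (mem_nhdsWithin_of_mem_nhds (ball_mem_nhds 0 one_pos))
    rw [h]; infer_instance
  have hmemS : ∀ᶠ x in l, x ∈ S := self_mem_nhdsWithin
  -- F := ∂₁Φ - i ∂₂Φ componentwise
  set F : ℂ → Fin m → ℂ := fun x k => (p1 Φ x k : ℂ) - Complex.I * (p2 Φ x k) with hF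
  -- norm helpers
  have hnsub : ∀ (a b : ℝ), ‖(a:ℂ) - Complex.I * b‖^2 = a^2 + b^2 := by
    intro a b
    rw [Complex.sq_norm, Complex.normSq_apply]
    simp; ring
  have hnadd : ∀ (a b : ℝ), ‖(a:ℂ) + Complex.I * b‖^2 = a^2 + b^2 := by
    intro a b
    rw [Complex.sq_norm, Complex.normSq_apply]
    simp; ring
  have hsumeq : ∀ x ∈ S, ∑ k, p1 Φ x k ^ 2 = ∑ k, p2 Φ x k ^ 2 := by
    intro x hx
    exact (Real.sqrt_inj (by positivity) (by positivity)).mp (hconf x hx).2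
  have heLamSq : ∀ x : ℂ, eLam Φ x ^ 2 = ∑ k, p1 Φ x k ^ 2 := by
    intro x; rw [eLam, Real.sq_sqrt (by positivity)]
  -- conformality in complex form: sum of squares of F vanishes
  have hFsq : ∀ x ∈ S, ∑ k, (F x k)^2 = 0 := by
    intro x hx
    have key : ∑ k, (F x k)^2
        = ((∑ k, (p1 Φ x k ^2 - p2 Φ x k ^2) : ℝ):ℂ)
          - 2*Complex.I*((∑ k, p1 Φ x k * p2 Φ x k : ℝ):ℂ) := by
      push_cast
      rw [Finset.mul_sum, ← Finset.sum_sub_distrib]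
      refine Finset.sum_congr rfl fun k _ => ?_
      simp only [hF]
      linear_combination ((p2 Φ x k : ℂ)^2) * Complex.I_sq
    rw [key, Finset.sum_sub_distrib, hsumeq x hx, (hconf x hx).1]
    simp
  -- sum of norm squares of F equals 2 e^{2λ}
  have hFnorm : ∀ x ∈ S, ∑ k, ‖F x k‖^2 = 2 * eLam Φ x ^2 := by
    intro x hx
    have : ∑ k, ‖F x k‖^2 = ∑ k, (p1 Φ x k ^2 + p2 Φ x k ^2) := by
      refine Finset.sum_congr rfl fun k _ => ?_
      simp only [hF]; exact hnsub _ _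
    rw [this, Finset.sum_add_distrib, ← hsumeq x hx, heLamSq]; ring
  -- limits of F x k / x^n   along l
  have hgk : ∀ k, Tendsto (fun x => F x k / x^n) l
      (𝓝 ((θ₀:ℂ)*((A1 k:ℂ) + Complex.I * (A2 k:ℂ)))) := by
    intro k
    have hu : Tendsto (fun x => ‖((eLam Φ x : ℂ)/x^n)‖) l (𝓝 c) := by
      refine hlim.congr' ?_
      filter_upwards [hmemS] with x hx
      have h0 : (0:ℝ) ≤ eLam Φ x := Real.sqrt_nonneg _
      rw [norm_div, norm_pow, Complex.norm_real, Real.norm_of_nonneg h0]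
    have hTk : Tendsto (fun x => T x k) l (𝓝 0) := by
      have := ((continuous_apply k).tendsto (0 : Fin m → ℂ)).comp hT
      exact this
    have hprod : Tendsto (fun x => ((eLam Φ x:ℂ)/x^n) * T x k) l (𝓝 0) := by
      rw [tendsto_zero_iff_norm_tendsto_zero]
      have h2 : Tendsto (fun x => ‖((eLam Φ x:ℂ)/x^n)‖ * ‖T x k‖) l (𝓝 (c*0)) :=
        hu.mul (tendsto_zero_iff_norm_tendsto_zero.mp hTk)
      simpa [norm_mul] using h2
    have h3 : Tendsto (fun x => (θ₀:ℂ)*((A1 k:ℂ) + Complex.I * (A2 k:ℂ))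
        + ((eLam Φ x:ℂ)/x^n) * T x k) l
        (𝓝 ((θ₀:ℂ)*((A1 k:ℂ) + Complex.I * (A2 k:ℂ)))) := by
      simpa using tendsto_const_nhds.add hprod
    refine h3.congr' ?_
    filter_upwards [hmemS] with x hx
    have hx0 : x ≠ 0 := fun h => hx.2 (by simpa using h)
    have hxn : x^n ≠ 0 := pow_ne_zero _ hx0
    have hex := hexp x hx k
    have hFx : F x k = (θ₀:ℂ)*((A1 k:ℂ) + Complex.I*(A2 k:ℂ))*x^n + (eLam Φ x:ℂ)*T x k := hex
    rw [hFx]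
    field_simp
  -- first limit identity
  have heq1 : (∑ k, ((θ₀:ℂ)*((A1 k:ℂ) + Complex.I*(A2 k:ℂ)))^2) = 0 := by
    have hlim1 : Tendsto (fun x => ∑ k, (F x k / x^n)^2) l
        (𝓝 (∑ k, ((θ₀:ℂ)*((A1 k:ℂ) + Complex.I*(A2 k:ℂ)))^2)) :=
      tendsto_finset_sum _ fun k _ => (hgk k).pow 2
    refine tendsto_nhds_unique hlim1 ?_
    refine Tendsto.congr' ?_ tendsto_const_nhds
    filter_upwards [hmemS] with x hx
    simp only [div_pow, ← Finset.sum_div, hFsq x hx, zero_div]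
  -- second limit identity
  have heq2 : ∑ k, ‖(θ₀:ℂ)*((A1 k:ℂ) + Complex.I*(A2 k:ℂ))‖^2 = 2*c^2 := by
    have hlim2 : Tendsto (fun x => ∑ k, ‖F x k / x^n‖^2) l
        (𝓝 (∑ k, ‖(θ₀:ℂ)*((A1 k:ℂ) + Complex.I*(A2 k:ℂ))‖^2)) :=
      tendsto_finset_sum _ fun k _ => ((hgk k).norm.pow 2)
    refine tendsto_nhds_unique hlim2 ?_
    have hlim2' : Tendsto (fun x : ℂ => 2 * (eLam Φ x / ‖x‖ ^ n)^2) l (𝓝 (2*c^2)) :=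
      (hlim.pow 2).const_mul 2
    refine Tendsto.congr' ?_ hlim2'
    filter_upwards [hmemS] with x hx
    have : ∑ k, ‖F x k / x^n‖^2 = (∑ k, ‖F x k‖^2) / (‖x‖^n)^2 := by
      simp only [norm_div, norm_pow, div_pow, ← Finset.sum_div]
    rw [this, hFnorm x hx]
    ring
  -- extract real identities from heq1
  have key : ∀ (k : Fin m), ((θ₀:ℂ)*((A1 k:ℂ) + Complex.I*(A2 k:ℂ)))^2
      = Complex.ofReal ((θ₀:ℝ)^2*(A1 k^2 - A2 k^2))
        + Complex.ofReal (2*(θ₀:ℝ)^2*(A1 k)*(A2 k)) * Complex.I := by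
    intro k
    push_cast
    linear_combination ((θ₀:ℂ)^2*(A2 k:ℂ)^2) * Complex.I_sq
  have heq1' : ((∑ k, (θ₀:ℝ)^2*(A1 k^2 - A2 k^2) : ℝ):ℂ)
      + ((∑ k, 2*(θ₀:ℝ)^2*(A1 k)*(A2 k) : ℝ):ℂ) * Complex.I = 0 := by
    rw [← heq1]
    rw [Finset.sum_congr rfl fun k _ => key k, Finset.sum_add_distrib, ← Finset.sum_mul]
    push_cast
    ring
  have hofReal : ∀ (a b : ℝ), (a:ℂ) + (b:ℂ)*Complex.I = 0 → a = 0 ∧ b = 0 := by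
    intro a b h
    have h1 := congrArg Complex.re h
    have h2 := congrArg Complex.im h
    simp only [Complex.add_re, Complex.ofReal_re, Complex.mul_re, Complex.ofReal_im,
      Complex.I_re, Complex.I_im, Complex.add_im, Complex.mul_im,
      Complex.zero_re, Complex.zero_im] at h1 h2
    constructor <;> linarith
  obtain ⟨hre, him⟩ := hofReal _ _ heq1'
  -- conclusion 1
  have hA12 : (∑ k, A1 k * A2 k) = 0 := by
    have h : (∑ k, 2*(θ₀:ℝ)^2*(A1 k)*(A2 k)) = 2*(θ₀:ℝ)^2 * ∑ k, A1 k * A2 k := by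
      rw [Finset.mul_sum]; refine Finset.sum_congr rfl fun k _ => by ring
    rw [h] at him
    have h2 : 2*(θ₀:ℝ)^2 ≠ 0 := by positivity
    exact (mul_eq_zero.mp him).resolve_left h2
  -- equality of the two sums of squares
  have hAeq : (∑ k, A1 k ^2) = ∑ k, A2 k ^2 := by
    have h : (∑ k, (θ₀:ℝ)^2*(A1 k^2 - A2 k^2))
        = (θ₀:ℝ)^2 * ((∑ k, A1 k ^2) - ∑ k, A2 k ^2) := by
      rw [← Finset.mul_sum, Finset.sum_sub_distrib]
    rw [h] at hre
    have h2 : ((θ₀:ℝ))^2 ≠ 0 := by positivity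
    have := (mul_eq_zero.mp hre).resolve_left h2
    linarith [sub_eq_zero.mp this]
  -- the norm identity: θ₀² (∑A1² + ∑A2²) = 2c²
  have heq2' : (θ₀:ℝ)^2 * ((∑ k, A1 k ^2) + ∑ k, A2 k ^2) = 2*c^2 := by
    have h : ∀ k : Fin m, ‖(θ₀:ℂ)*((A1 k:ℂ) + Complex.I*(A2 k:ℂ))‖^2
        = (θ₀:ℝ)^2 * (A1 k^2 + A2 k^2) := by
      intro k
      rw [norm_mul, mul_pow, hnadd, Complex.norm_natCast]
    rw [Finset.sum_congr rfl fun k _ => h k, ← Finset.mul_sum, Finset.sum_add_distrib] at heq2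
    exact heq2
  have hA1sq : (∑ k, A1 k ^2) = (c/θ₀)^2 := by
    rw [← hAeq] at heq2'
    field_simp
    linarith
  have hA2sq : (∑ k, A2 k ^2) = (c/θ₀)^2 := by rw [← hAeq]; exact hA1sq
  have hcd : (0:ℝ) ≤ c/θ₀ := div_nonneg hc.le hθR.le
  exact ⟨hA12, by rw [hA1sq, Real.sqrt_sq hcd], by rw [hA2sq, Real.sqrt_sq hcd]⟩
end

section
/- Let m ≥ 2, θ₀ ∈ ℕ with θ₀ ≥ 1, and ε₁ ∈ (0,1). Let A₀, …, A_{θ₀−1} ∈ ℂ^m, and let ζ : B₁(0)\{0} → ℝ^m be C¹ with |∇ζ(x)| ≤ C |x|^{2θ₀−1−ε₁} for all 0 < |x| < 1. Suppose that the map Φ(x) := Σ_{j=0}^{θ₀−1} Re(A_j x^{θ₀+j}) + ζ(x) is conformal on B₁(0)\{0}, i.e. ∂₁Φ·∂₂Φ = 0 and |∂₁Φ| = |∂₂Φ| pointwise. Then for every s ∈ {0, 1, …, θ₀−1}: Σ_{j=0}^{s} (θ₀+j)(θ₀+s−j) ⟨A_j, A_{s−j}⟩ = 0. In particular (s = 0),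 ⟨A₀, A₀⟩ = 0. -/
open MeasureTheory Metric Complex

/-- The map `Φ(x) = Σ_{j<θ₀} Re(A_j x^{θ₀+j}) + ζ(x)`, componentwise. -/
noncomputable def PhiExp (m θ₀ : ℕ) (A : ℕ → Fin m → ℂ) (ζ : ℂ → Fin m → ℝ)
    (x : ℂ) (k : Fin m) : ℝ :=
  (∑ j ∈ Finset.range θ₀, (A j k * x ^ (θ₀ + j)).re) + ζ x k

/-- `∂₁Φ` of the `k`-th component. -/
noncomputable def pd1' {m : ℕ} (Φ : ℂ → Fin m → ℝ) (x : ℂ) (k : Fin m) : ℝ :=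
  fderiv ℝ (fun y => Φ y k) x 1

/-- `∂₂Φ` of the `k`-th component. -/
noncomputable def pd2' {m : ℕ} (Φ : ℂ → Fin m → ℝ) (x : ℂ) (k : Fin m) : ℝ :=
  fderiv ℝ (fun y => Φ y k) x Complex.I


open Polynomial Filter Topology

lemma hasFDerivAt_re_mul_pow (a : ℂ) (n : ℕ) (x : ℂ) :
    HasFDerivAt (fun y : ℂ => (a * y ^ n).re)
      (Complex.reCLM.comp (((1 : ℂ →L[ℂ] ℂ).smulRight (a * (n * x ^ (n-1)))).restrictScalars ℝ)) x := by
  have h : HasDerivAt (fun y : ℂ => a * y ^ n) (a * (n * x ^ (n-1))) x :=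
    (hasDerivAt_pow n x).const_mul a
  exact Complex.reCLM.hasFDerivAt.comp x (h.hasFDerivAt.restrictScalars ℝ)

noncomputable def wfun (m θ₀ : ℕ) (A : ℕ → Fin m → ℂ) (k : Fin m) (x : ℂ) : ℂ :=
  ∑ j ∈ Finset.range θ₀, A j k * (((θ₀+j : ℕ) : ℂ) * x ^ (θ₀+j-1))

noncomputable def rpoly (m θ₀ : ℕ) (A : ℕ → Fin m → ℂ) (k : Fin m) : Polynomial ℂ :=
  ∑ j ∈ Finset.range θ₀, Polynomial.C (((θ₀+j : ℕ) : ℂ) * A j k) * Polynomial.X ^ j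

noncomputable def Rpoly (m θ₀ : ℕ) (A : ℕ → Fin m → ℂ) : Polynomial ℂ :=
  ∑ k : Fin m, (rpoly m θ₀ A k)^2

lemma wfun_eval (m θ₀ : ℕ) (hθ : 1 ≤ θ₀) (A : ℕ → Fin m → ℂ) (k : Fin m) (x : ℂ) :
    wfun m θ₀ A k x = x ^ (θ₀-1) * (rpoly m θ₀ A k).eval x := by
  rw [wfun, rpoly, Polynomial.eval_finset_sum, Finset.mul_sum]
  apply Finset.sum_congr rfl
  intro j _
  have h : θ₀ + j - 1 = (θ₀ - 1) + j := by omega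
  rw [h, pow_add]
  simp
  ring

lemma pd_eq (m θ₀ : ℕ) (A : ℕ → Fin m → ℂ) (ζ : ℂ → Fin m → ℝ)
    (hζ : ContDiffOn ℝ 1 ζ (ball (0 : ℂ) 1 \ {0}))
    (x : ℂ) (hx : x ∈ ball (0 : ℂ) 1 \ {0}) (k : Fin m) :
    pd1' (PhiExp m θ₀ A ζ) x k
      = (wfun m θ₀ A k x).re + fderiv ℝ (fun y => ζ y k) x 1 ∧
    pd2' (PhiExp m θ₀ A ζ) x k
      = (Complex.I * wfun m θ₀ A k x).re + fderiv ℝ (fun y => ζ y k) x Complex.I := by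
  have hopen : IsOpen (ball (0:ℂ) 1 \ {0}) := isOpen_ball.sdiff isClosed_singleton
  have hd : DifferentiableAt ℝ ζ x :=
    (hζ.differentiableOn one_ne_zero).differentiableAt (hopen.mem_nhds hx)
  have hdk : DifferentiableAt ℝ (fun y => ζ y k) x := (differentiableAt_pi.mp hd k)
  have hsum : HasFDerivAt (fun y : ℂ => ∑ j ∈ Finset.range θ₀, (A j k * y ^ (θ₀+j)).re)
      (∑ j ∈ Finset.range θ₀, Complex.reCLM.comp
        (((1 : ℂ →L[ℂ] ℂ).smulRight (A j k * ((θ₀+j : ℕ) * x ^ (θ₀+j-1)))).restrictScalars ℝ)) x :=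
    HasFDerivAt.fun_sum (fun j _ => hasFDerivAt_re_mul_pow (A j k) (θ₀+j) x)
  have hΦ : HasFDerivAt (fun y => PhiExp m θ₀ A ζ y k)
      ((∑ j ∈ Finset.range θ₀, Complex.reCLM.comp
        (((1 : ℂ →L[ℂ] ℂ).smulRight (A j k * ((θ₀+j : ℕ) * x ^ (θ₀+j-1)))).restrictScalars ℝ))
        + fderiv ℝ (fun y => ζ y k) x) x := by
    exact hsum.add hdk.hasFDerivAt
  constructor
  · rw [pd1', hΦ.fderiv]
    simp [wfun, Complex.re_sum]
  · rw [pd2', hΦ.fderiv]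
    simp [wfun, Finset.mul_sum, Complex.re_sum]

lemma keyC (w : ℂ) (d1 d2 : ℝ) :
    (((w.re + d1 : ℝ)) : ℂ) - Complex.I * (((Complex.I*w).re + d2 : ℝ) : ℂ)
      = w + ((d1:ℂ) - Complex.I*(d2:ℂ)) := by
  push_cast
  apply Complex.ext <;> simp <;> ring

lemma Rpoly_coeff (m θ₀ : ℕ) (A : ℕ → Fin m → ℂ) (s : ℕ) (hs : s < θ₀) :
    (Rpoly m θ₀ A).coeff s = ∑ j ∈ Finset.range (s+1),
      (((θ₀+j)*(θ₀+s-j) : ℕ) : ℂ) * (∑ k, A j k * A (s-j) k) := by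
  have hrc : ∀ (k : Fin m) (i : ℕ), i < θ₀ →
      (rpoly m θ₀ A k).coeff i = ((θ₀+i : ℕ) : ℂ) * A i k := by
    intro k i hi
    rw [rpoly, Polynomial.finset_sum_coeff,
      Finset.sum_congr rfl (fun j _ => by rw [Polynomial.coeff_C_mul, Polynomial.coeff_X_pow])]
    simp [mul_ite, Finset.sum_ite_eq, Finset.sum_ite_eq', hi]
  rw [Rpoly, Polynomial.finset_sum_coeff]
  have hk : ∀ k : Fin m, ((rpoly m θ₀ A k)^2).coeff s
      = ∑ j ∈ Finset.range (s+1),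
          ((((θ₀+j : ℕ)) : ℂ) * A j k) * ((((θ₀+(s-j) : ℕ)) : ℂ) * A (s-j) k) := by
    intro k
    rw [sq, Polynomial.coeff_mul, Finset.Nat.sum_antidiagonal_eq_sum_range_succ_mk]
    apply Finset.sum_congr rfl
    intro j hj
    have hj' : j ≤ s := Nat.lt_succ_iff.mp (Finset.mem_range.mp hj)
    rw [hrc k j (lt_of_le_of_lt hj' hs), hrc k (s-j) (lt_of_le_of_lt (Nat.sub_le s j) hs)]
  rw [Finset.sum_congr rfl (fun k _ => hk k), Finset.sum_comm]
  apply Finset.sum_congr rfl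
  intro j hj
  have hj' : j ≤ s := Nat.lt_succ_iff.mp (Finset.mem_range.mp hj)
  have h2 : θ₀ + s - j = θ₀ + (s - j) := by omega
  rw [h2, Finset.mul_sum]
  apply Finset.sum_congr rfl
  intro k _
  push_cast
  ring

lemma coeff_vanish (P : Polynomial ℂ) (K ρ : ℝ)
    (hb : ∀ x : ℂ, x ≠ 0 → ‖x‖ < 1 → ‖P.eval x‖ ≤ K * ‖x‖ ^ ρ) :
    ∀ n : ℕ, (n : ℝ) < ρ → P.coeff n = 0 := by
  intro n
  induction n using Nat.strong_induction_on with
  | _ n IH =>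
    intro hn
    have hlow : ∀ d < n, P.coeff d = 0 := fun d hd => IH d hd (lt_trans (by exact_mod_cast hd) hn)
    obtain ⟨Q, hQ⟩ := (Polynomial.X_pow_dvd_iff.mpr hlow)
    have hco : P.coeff n = Q.eval 0 := by
      have : P.coeff (0 + n) = Q.coeff 0 := by rw [hQ, Polynomial.coeff_X_pow_mul]
      simpa [Polynomial.coeff_zero_eq_eval_zero] using this
    rw [hco]
    have key : ∀ x : ℂ, x ≠ 0 → ‖x‖ < 1 → ‖Q.eval x‖ ≤ K * ‖x‖ ^ (ρ - n) := by
      intro x hx hx1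
      have hxp : (0:ℝ) < ‖x‖ := norm_pos_iff.mpr hx
      have h1 := hb x hx hx1
      rw [hQ] at h1
      simp only [Polynomial.eval_mul, Polynomial.eval_pow, Polynomial.eval_X, norm_mul,
        norm_pow] at h1
      have hsplit : K * ‖x‖ ^ ρ = ‖x‖ ^ n * (K * ‖x‖ ^ (ρ - n)) := by
        rw [← Real.rpow_natCast ‖x‖ n, ← mul_assoc, mul_comm _ K, mul_assoc,
          ← Real.rpow_add hxp]
        ring_nf
      rw [hsplit] at h1
      exact le_of_mul_le_mul_left h1 (pow_pos hxp n)
    have t1 : Tendsto (fun x : ℂ => ‖Q.eval x‖) (𝓝[≠] (0:ℂ)) (nhds ‖Q.eval 0‖) :=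
      ((Q.continuous_aeval.norm.tendsto 0).mono_left nhdsWithin_le_nhds)
    have t2 : Tendsto (fun x : ℂ => K * ‖x‖ ^ (ρ - n)) (𝓝[≠] (0:ℂ)) (nhds 0) := by
      have hρ : 0 < ρ - n := by linarith
      have hnorm : Tendsto (fun x : ℂ => ‖x‖) (𝓝[≠] (0:ℂ)) (nhds 0) := by
        simpa using ((continuous_norm (E := ℂ)).tendsto 0).mono_left nhdsWithin_le_nhds
      have h3 : ContinuousAt (fun t : ℝ => K * t ^ (ρ - n)) 0 :=
        (Real.continuousAt_rpow_const 0 (ρ - n) (Or.inr hρ.le)).const_smul K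
      have h4 := h3.tendsto.comp hnorm
      simpa [Function.comp_def, Real.zero_rpow hρ.ne'] using h4
    have hle : ‖Q.eval 0‖ ≤ 0 := by
      refine le_of_tendsto_of_tendsto t1 t2 ?_
      have hev : ∀ᶠ x : ℂ in 𝓝 (0:ℂ), ‖x‖ < 1 := by
        filter_upwards [Metric.ball_mem_nhds (0:ℂ) one_pos] with x hx
        simpa [dist_eq_norm] using hx
      filter_upwards [self_mem_nhdsWithin, eventually_nhdsWithin_of_eventually_nhds hev]
        with x hx hx1
      exact key x hx hx1
    simpa using norm_le_zero_iff.mp hle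

set_option maxHeartbeats 1000000 in
theorem stmt11 (m θ₀ : ℕ) (hm : 2 ≤ m) (hθ : 1 ≤ θ₀)
    (ε₁ : ℝ) (hε : ε₁ ∈ Set.Ioo (0 : ℝ) 1)
    (A : ℕ → Fin m → ℂ) (ζ : ℂ → Fin m → ℝ) (C : ℝ)
    (hζ : ContDiffOn ℝ 1 ζ (ball (0 : ℂ) 1 \ {0}))
    (hζb : ∀ x : ℂ, x ≠ 0 → ‖x‖ < 1 → ∀ k : Fin m,
      ‖fderiv ℝ (fun y => ζ y k) x‖ ≤ C * ‖x‖ ^ ((2 * θ₀ : ℝ) - 1 - ε₁))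
    (hconf : ∀ x ∈ ball (0 : ℂ) 1 \ {0},
      (∑ k, pd1' (PhiExp m θ₀ A ζ) x k * pd2' (PhiExp m θ₀ A ζ) x k) = 0 ∧
      Real.sqrt (∑ k, (pd1' (PhiExp m θ₀ A ζ) x k) ^ 2)
        = Real.sqrt (∑ k, (pd2' (PhiExp m θ₀ A ζ) x k) ^ 2)) :
    ∀ s : ℕ, s < θ₀ →
      (∑ j ∈ Finset.range (s + 1),
        (((θ₀ + j) * (θ₀ + s - j) : ℕ) : ℂ) * (∑ k, A j k * A (s - j) k)) = 0 := by
  obtain ⟨hε0, hε1⟩ := hε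
  have hθR : (1:ℝ) ≤ (θ₀:ℝ) := by exact_mod_cast hθ
  have hC : 0 ≤ C := by
    have h := hζb (1/2) (by norm_num) (by norm_num) ⟨0, by omega⟩
    have hx : (0:ℝ) < ‖(1/2 : ℂ)‖ ^ ((2*θ₀:ℝ)-1-ε₁) :=
      Real.rpow_pos_of_pos (by norm_num) _
    nlinarith [norm_nonneg (fderiv ℝ (fun y => ζ y (⟨0, by omega⟩ : Fin m)) (1/2:ℂ))]
  set K : ℝ := ∑ k : Fin m,
      (4*(∑ j ∈ Finset.range θ₀, ((θ₀+j : ℕ):ℝ)*‖A j k‖)*C + 4*C^2) with hK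
  have hb : ∀ x : ℂ, x ≠ 0 → ‖x‖ < 1 →
      ‖(Rpoly m θ₀ A).eval x‖ ≤ K * ‖x‖ ^ ((θ₀:ℝ) - ε₁) := by
    intro x hx0 hx1
    have hxp : (0:ℝ) < ‖x‖ := norm_pos_iff.mpr hx0
    have hxmem : x ∈ ball (0:ℂ) 1 \ {0} := by
      constructor
      · simpa [dist_eq_norm] using hx1
      · simpa using hx0
    -- the error terms
    set E : Fin m → ℂ := fun k =>
      ((fderiv ℝ (fun y => ζ y k) x 1 : ℝ) : ℂ)
        - Complex.I * ((fderiv ℝ (fun y => ζ y k) x Complex.I : ℝ) : ℂ) with hE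
    have hgk : ∀ k : Fin m,
        ((pd1' (PhiExp m θ₀ A ζ) x k : ℂ) - Complex.I * (pd2' (PhiExp m θ₀ A ζ) x k : ℂ))
          = wfun m θ₀ A k x + E k := by
      intro k
      obtain ⟨h1, h2⟩ := pd_eq m θ₀ A ζ hζ x hxmem k
      rw [h1, h2, hE]
      exact keyC _ _ _
    obtain ⟨hc1, hc2⟩ := hconf x hxmem
    have hsq : (∑ k, (pd1' (PhiExp m θ₀ A ζ) x k)^2)
        = ∑ k, (pd2' (PhiExp m θ₀ A ζ) x k)^2 := by
      have h1 : (0:ℝ) ≤ ∑ k, (pd1' (PhiExp m θ₀ A ζ) x k)^2 :=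
        Finset.sum_nonneg fun _ _ => sq_nonneg _
      have h2 : (0:ℝ) ≤ ∑ k, (pd2' (PhiExp m θ₀ A ζ) x k)^2 :=
        Finset.sum_nonneg fun _ _ => sq_nonneg _
      exact (Real.sqrt_inj h1 h2).mp hc2
    have hg0 : ∑ k, ((pd1' (PhiExp m θ₀ A ζ) x k : ℂ)
        - Complex.I * (pd2' (PhiExp m θ₀ A ζ) x k : ℂ))^2 = 0 := by
      have hexp : ∀ k : Fin m, ((pd1' (PhiExp m θ₀ A ζ) x k : ℂ)
          - Complex.I * (pd2' (PhiExp m θ₀ A ζ) x k : ℂ))^2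
          = (((pd1' (PhiExp m θ₀ A ζ) x k)^2 : ℝ) : ℂ)
            - (((pd2' (PhiExp m θ₀ A ζ) x k)^2 : ℝ) : ℂ)
            - (2*Complex.I) * (((pd1' (PhiExp m θ₀ A ζ) x k
                * pd2' (PhiExp m θ₀ A ζ) x k : ℝ)) : ℂ) := by
        intro k
        push_cast
        linear_combination ((pd2' (PhiExp m θ₀ A ζ) x k : ℂ))^2 * Complex.I_sq
      rw [Finset.sum_congr rfl (fun k _ => hexp k), Finset.sum_sub_distrib,
        Finset.sum_sub_distrib, ← Finset.mul_sum, ← Complex.ofReal_sum,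
        ← Complex.ofReal_sum, ← Complex.ofReal_sum, hsq, hc1]
      simp
    have hw0 : ∑ k, (wfun m θ₀ A k x)^2
        = -(∑ k, (2 * wfun m θ₀ A k x * E k + (E k)^2)) := by
      rw [Finset.sum_congr rfl (fun k _ => by rw [hgk k])] at hg0
      have h : (∑ k, (wfun m θ₀ A k x)^2)
          + ∑ k, (2 * wfun m θ₀ A k x * E k + (E k)^2) = 0 := by
        rw [← Finset.sum_add_distrib, ← hg0]
        exact Finset.sum_congr rfl fun k _ => by ring
      linear_combination h
    -- norm bounds
    have hwb : ∀ k : Fin m, ‖wfun m θ₀ A k x‖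
        ≤ (∑ j ∈ Finset.range θ₀, ((θ₀+j : ℕ):ℝ)*‖A j k‖) * ‖x‖^(θ₀-1) := by
      intro k
      rw [wfun, Finset.sum_mul]
      refine (norm_sum_le _ _).trans (Finset.sum_le_sum fun j _ => ?_)
      rw [norm_mul, norm_mul, Complex.norm_natCast, norm_pow]
      have hple : ‖x‖^(θ₀+j-1) ≤ ‖x‖^(θ₀-1) :=
        pow_le_pow_of_le_one (norm_nonneg x) hx1.le (by omega)
      have h0 : (0:ℝ) ≤ ((θ₀+j:ℕ):ℝ) * ‖A j k‖ := by positivity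
      calc ‖A j k‖ * (((θ₀+j:ℕ):ℝ) * ‖x‖^(θ₀+j-1))
          ≤ ‖A j k‖ * (((θ₀+j:ℕ):ℝ) * ‖x‖^(θ₀-1)) := by
            apply mul_le_mul_of_nonneg_left _ (norm_nonneg _)
            exact mul_le_mul_of_nonneg_left hple (by positivity)
        _ = ((θ₀+j:ℕ):ℝ) * ‖A j k‖ * ‖x‖^(θ₀-1) := by ring
    have hEb : ∀ k : Fin m, ‖E k‖ ≤ 2*C*‖x‖^((2*θ₀:ℝ)-1-ε₁) := by
      intro k
      have hD := hζb x hx0 hx1 k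
      calc ‖E k‖ ≤ ‖((fderiv ℝ (fun y => ζ y k) x 1 : ℝ) : ℂ)‖
            + ‖Complex.I * ((fderiv ℝ (fun y => ζ y k) x Complex.I : ℝ) : ℂ)‖ :=
          norm_sub_le _ _
        _ = ‖fderiv ℝ (fun y => ζ y k) x 1‖ + ‖fderiv ℝ (fun y => ζ y k) x Complex.I‖ := by
          simp
        _ ≤ ‖fderiv ℝ (fun y => ζ y k) x‖ * ‖(1:ℂ)‖
            + ‖fderiv ℝ (fun y => ζ y k) x‖ * ‖Complex.I‖ :=
          add_le_add ((fderiv ℝ (fun y => ζ y k) x).le_opNorm 1)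
            ((fderiv ℝ (fun y => ζ y k) x).le_opNorm Complex.I)
        _ = 2 * ‖fderiv ℝ (fun y => ζ y k) x‖ := by
          rw [norm_one, Complex.norm_I]; ring
        _ ≤ 2*C*‖x‖^((2*θ₀:ℝ)-1-ε₁) := by linarith
    -- exponent bookkeeping
    have hc1' : ‖x‖^(θ₀-1) * ‖x‖^((2*θ₀:ℝ)-1-ε₁)
        = ‖x‖^(2*(θ₀-1)) * ‖x‖^((θ₀:ℝ)-ε₁) := by
      rw [← Real.rpow_natCast ‖x‖ (θ₀-1), ← Real.rpow_natCast ‖x‖ (2*(θ₀-1)),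
        ← Real.rpow_add hxp, ← Real.rpow_add hxp]
      congr 1
      have e1 : ((θ₀-1:ℕ):ℝ) = (θ₀:ℝ)-1 := by
        rw [Nat.cast_sub hθ]; norm_num
      have e2 : ((2*(θ₀-1):ℕ):ℝ) = 2*((θ₀:ℝ)-1) := by
        rw [Nat.cast_mul, Nat.cast_sub hθ]; norm_num
      rw [e1, e2]; ring
    have hc2' : ‖x‖^((2*θ₀:ℝ)-1-ε₁) * ‖x‖^((2*θ₀:ℝ)-1-ε₁)
        ≤ ‖x‖^(2*(θ₀-1)) * ‖x‖^((θ₀:ℝ)-ε₁) := by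
      rw [← Real.rpow_natCast ‖x‖ (2*(θ₀-1)), ← Real.rpow_add hxp, ← Real.rpow_add hxp]
      apply Real.rpow_le_rpow_of_exponent_ge hxp hx1.le
      have e2 : ((2*(θ₀-1):ℕ):ℝ) = 2*((θ₀:ℝ)-1) := by
        rw [Nat.cast_mul, Nat.cast_sub hθ]; norm_num
      rw [e2]
      linarith
    -- combine per-k bound
    have hterm : ∀ k : Fin m, ‖2 * wfun m θ₀ A k x * E k + (E k)^2‖
        ≤ (4*(∑ j ∈ Finset.range θ₀, ((θ₀+j : ℕ):ℝ)*‖A j k‖)*C + 4*C^2)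
            * (‖x‖^(2*(θ₀-1)) * ‖x‖^((θ₀:ℝ)-ε₁)) := by
      intro k
      set Mk := ∑ j ∈ Finset.range θ₀, ((θ₀+j : ℕ):ℝ)*‖A j k‖ with hMk
      have hMk0 : 0 ≤ Mk := Finset.sum_nonneg fun j _ => by positivity
      have e1 : ‖wfun m θ₀ A k x‖ * ‖E k‖
          ≤ (Mk * ‖x‖^(θ₀-1)) * (2*C*‖x‖^((2*θ₀:ℝ)-1-ε₁)) :=
        mul_le_mul (hwb k) (hEb k) (norm_nonneg _) (by positivity)
      have e2 : ‖E k‖^2 ≤ (2*C*‖x‖^((2*θ₀:ℝ)-1-ε₁))^2 :=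
        pow_le_pow_left₀ (norm_nonneg _) (hEb k) 2
      have e3 : ‖2 * wfun m θ₀ A k x * E k + (E k)^2‖
          ≤ 2 * (‖wfun m θ₀ A k x‖ * ‖E k‖) + ‖E k‖^2 := by
        refine (norm_add_le _ _).trans ?_
        rw [norm_mul, norm_mul, norm_pow]
        simp [norm_ofNat]
        ring_nf
        try rfl
        try linarith
      have hvu0 : (0:ℝ) ≤ ‖x‖^(2*(θ₀-1)) * ‖x‖^((θ₀:ℝ)-ε₁) := by positivity
      calc ‖2 * wfun m θ₀ A k x * E k + (E k)^2‖
          ≤ 2 * ((Mk * ‖x‖^(θ₀-1)) * (2*C*‖x‖^((2*θ₀:ℝ)-1-ε₁)))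
            + (2*C*‖x‖^((2*θ₀:ℝ)-1-ε₁))^2 := by
            refine e3.trans (add_le_add (by linarith) e2)
        _ = 4*Mk*C * (‖x‖^(θ₀-1) * ‖x‖^((2*θ₀:ℝ)-1-ε₁))
            + 4*C^2 * (‖x‖^((2*θ₀:ℝ)-1-ε₁) * ‖x‖^((2*θ₀:ℝ)-1-ε₁)) := by ring
        _ ≤ 4*Mk*C * (‖x‖^(2*(θ₀-1)) * ‖x‖^((θ₀:ℝ)-ε₁))
            + 4*C^2 * (‖x‖^(2*(θ₀-1)) * ‖x‖^((θ₀:ℝ)-ε₁)) := by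
            rw [hc1']
            refine add_le_add le_rfl ?_
            exact mul_le_mul_of_nonneg_left hc2' (by positivity)
        _ = (4*Mk*C + 4*C^2) * (‖x‖^(2*(θ₀-1)) * ‖x‖^((θ₀:ℝ)-ε₁)) := by ring
    have hsumb : ‖∑ k, (wfun m θ₀ A k x)^2‖
        ≤ K * (‖x‖^(2*(θ₀-1)) * ‖x‖^((θ₀:ℝ)-ε₁)) := by
      rw [hw0, norm_neg, hK, Finset.sum_mul]
      exact (norm_sum_le _ _).trans (Finset.sum_le_sum fun k _ => hterm k)
    -- rewrite LHS via Rpoly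
    have hevv : ∑ k, (wfun m θ₀ A k x)^2 = x^(2*(θ₀-1)) * (Rpoly m θ₀ A).eval x := by
      rw [Rpoly, Polynomial.eval_finset_sum, Finset.mul_sum]
      refine Finset.sum_congr rfl fun k _ => ?_
      rw [wfun_eval m θ₀ hθ A k x, Polynomial.eval_pow, mul_pow, ← pow_mul, Nat.mul_comm]
    rw [hevv] at hsumb
    rw [norm_mul, norm_pow] at hsumb
    have hvpos : (0:ℝ) < ‖x‖^(2*(θ₀-1)) := pow_pos hxp _
    have : ‖x‖^(2*(θ₀-1)) * ‖(Rpoly m θ₀ A).eval x‖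
        ≤ ‖x‖^(2*(θ₀-1)) * (K * ‖x‖^((θ₀:ℝ)-ε₁)) := by
      calc ‖x‖^(2*(θ₀-1)) * ‖(Rpoly m θ₀ A).eval x‖
          ≤ K * (‖x‖^(2*(θ₀-1)) * ‖x‖^((θ₀:ℝ)-ε₁)) := hsumb
        _ = ‖x‖^(2*(θ₀-1)) * (K * ‖x‖^((θ₀:ℝ)-ε₁)) := by ring
    exact le_of_mul_le_mul_left this hvpos
  intro s hs
  have hcast : (s:ℝ) < (θ₀:ℝ) - ε₁ := by
    have : (s:ℝ) + 1 ≤ (θ₀:ℝ) := by exact_mod_cast hs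
    linarith
  have := coeff_vanish (Rpoly m θ₀ A) K ((θ₀:ℝ) - ε₁) hb s hcast
  rw [Rpoly_coeff m θ₀ A s hs] at this
  exact this
end

section
/- Let m ≥ 2 and let A¹, A² ∈ ℝ^m satisfy A¹ · A² = 0 and |A¹| = |A²| ≠ 0; set A := A¹ + iA² ∈ ℂ^m. Let N ∈ ℕ and let A₀, A₁, …, A_N ∈ ℂ^m with A₀ = A, such that the real and imaginary parts of each A_s lie in the real span of {A¹, A²}, and such that for every s ∈ {1, …, N}: Σ_{j=0}^{s} ⟨A_j, A_{s−j}⟩ = 0. Then for every s ∈ {0, …, N} there exists α_s ∈ ℂ with A_s = α_s A (and α₀ = 1). -/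
open Complex

theorem stmt12 (m : ℕ) (hm : 2 ≤ m) (A1 A2 : Fin m → ℝ)
    (horth : (∑ k, A1 k * A2 k) = 0)
    (hnorm : (∑ k, (A1 k) ^ 2) = ∑ k, (A2 k) ^ 2)
    (hne : (∑ k, (A1 k) ^ 2) ≠ 0)
    (N : ℕ) (A : ℕ → Fin m → ℂ)
    (hA0 : A 0 = fun k => (A1 k : ℂ) + Complex.I * (A2 k : ℂ))
    (hspan : ∀ s ≤ N,
      (fun k => (A s k).re) ∈ Submodule.span ℝ ({A1, A2} : Set (Fin m → ℝ)) ∧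
      (fun k => (A s k).im) ∈ Submodule.span ℝ ({A1, A2} : Set (Fin m → ℝ)))
    (hrel : ∀ s : ℕ, 1 ≤ s → s ≤ N →
      (∑ j ∈ Finset.range (s + 1), ∑ k, A j k * A (s - j) k) = 0) :
    ∀ s ≤ N, ∃ α : ℂ, A s = α • A 0 ∧ (s = 0 → α = 1) := by
  -- ⟨A0, A0⟩ = 0
  have hzero : (∑ k, A 0 k * A 0 k) = 0 := by
    have : ∀ k : Fin m, A 0 k * A 0 k =
        (((A1 k)^2 : ℝ) : ℂ) - (((A2 k)^2 : ℝ) : ℂ)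
          + (2 * Complex.I) * ((A1 k * A2 k : ℝ) : ℂ) := by
      intro k
      rw [hA0]
      push_cast
      ring_nf
      rw [Complex.I_sq]
      ring
    rw [Finset.sum_congr rfl (fun k _ => this k), Finset.sum_add_distrib,
      Finset.sum_sub_distrib, ← Finset.mul_sum, ← Complex.ofReal_sum,
      ← Complex.ofReal_sum, ← Complex.ofReal_sum, hnorm, horth]
    simp
  -- Key lemma: if the parts are in the span and ⟨A0, f⟩ = 0, then f = α • A0
  have key : ∀ s ≤ N, (∑ k, A 0 k * A s k) = 0 → ∃ α : ℂ, A s = α • A 0 := by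
    intro s hs hL
    obtain ⟨a, b, hab⟩ := Submodule.mem_span_pair.mp (hspan s hs).1
    obtain ⟨c, d, hcd⟩ := Submodule.mem_span_pair.mp (hspan s hs).2
    have hAs : ∀ k, A s k = ((a * A1 k + b * A2 k : ℝ) : ℂ)
        + Complex.I * ((c * A1 k + d * A2 k : ℝ) : ℂ) := by
      intro k
      have h1 := congrFun hab k
      have h2 := congrFun hcd k
      simp only [Pi.add_apply, Pi.smul_apply, smul_eq_mul] at h1 h2
      rw [← Complex.re_add_im (A s k), ← h1, ← h2]
      ring
    have expand : ∀ k : Fin m, A 0 k * A s k =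
        ((a : ℂ) + Complex.I * c) * (((A1 k)^2 : ℝ) : ℂ)
        + (Complex.I * b - d) * (((A2 k)^2 : ℝ) : ℂ)
        + ((b : ℂ) + Complex.I * d + Complex.I * a - c) * ((A1 k * A2 k : ℝ) : ℂ) := by
      intro k
      rw [hA0, hAs k]
      push_cast
      ring_nf
      rw [Complex.I_sq]
      ring
    have hLval : (∑ k, A 0 k * A s k) =
        (((a - d : ℝ) : ℂ) + Complex.I * ((b + c : ℝ) : ℂ)) * ((∑ k, (A1 k)^2 : ℝ) : ℂ) := by
      rw [Finset.sum_congr rfl (fun k _ => expand k), Finset.sum_add_distrib,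
        Finset.sum_add_distrib, ← Finset.mul_sum, ← Finset.mul_sum, ← Finset.mul_sum,
        ← Complex.ofReal_sum, ← Complex.ofReal_sum, ← Complex.ofReal_sum, hnorm, horth]
      push_cast
      ring
    rw [hLval] at hL
    have hS : ((∑ k, (A1 k)^2 : ℝ) : ℂ) ≠ 0 := by
      exact_mod_cast hne
    have hcoef : (((a - d : ℝ) : ℂ) + Complex.I * ((b + c : ℝ) : ℂ)) = 0 :=
      by
        rcases mul_eq_zero.mp hL with h | h
        · exact h
        · exact absurd h hS
    have had : a = d ∧ b + c = 0 := by
      have hre := congrArg Complex.re hcoef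
      have him := congrArg Complex.im hcoef
      simp at hre him
      constructor
      · linarith
      · linarith
    refine ⟨(a : ℂ) - Complex.I * b, ?_⟩
    funext k
    rw [hAs k, hA0]
    simp only [Pi.smul_apply, smul_eq_mul]
    have hd : d = a := had.1.symm
    have hc : c = -b := by linarith [had.2]
    rw [hd, hc]
    push_cast
    ring_nf
    rw [Complex.I_sq]
    ring
  intro s
  induction s using Nat.strong_induction_on with
  | _ s ih =>
    intro hs
    match s, hs with
    | 0, _ =>
      exact ⟨1, by simp, fun _ => rfl⟩
    | (t+1), hs =>
      have hL : (∑ k, A 0 k * A (t+1) k) = 0 := by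
        have hr := hrel (t+1) (Nat.le_add_left 1 t) hs
        rw [Finset.sum_range_succ, Finset.sum_range_succ'] at hr
        have hmid : ∀ i ∈ Finset.range t, (∑ k, A (i+1) k * A (t+1 - (i+1)) k) = 0 := by
          intro i hi
          simp only [Finset.mem_range] at hi
          obtain ⟨α, hα, -⟩ := ih (i+1) (by omega) (by omega)
          obtain ⟨β, hβ, -⟩ := ih (t+1-(i+1)) (by omega) (by omega)
          rw [hα, hβ]
          simp only [Pi.smul_apply, smul_eq_mul]
          have : ∀ k : Fin m, α * A 0 k * (β * A 0 k) = (α * β) * (A 0 k * A 0 k) := by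
            intro k; ring
          rw [Finset.sum_congr rfl (fun k _ => this k), ← Finset.mul_sum, hzero, mul_zero]
        rw [Finset.sum_congr rfl hmid] at hr
        simp only [Finset.sum_const_zero, zero_add, Nat.sub_zero, Nat.sub_self] at hr
        have hcomm : (∑ k, A (t+1) k * A 0 k) = ∑ k, A 0 k * A (t+1) k :=
          Finset.sum_congr rfl (fun k _ => mul_comm _ _)
        rw [hcomm] at hr
        have h2 : (2 : ℂ) * (∑ k, A 0 k * A (t+1) k) = 0 := by
          rw [two_mul]; exact hr
        have := mul_eq_zero.mp h2
        rcases this with h | h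
        · norm_num at h
        · exact h
      obtain ⟨α, hα⟩ := key (t+1) hs hL
      exact ⟨α, hα, by omega⟩
end

section
/- Let N ≥ 1 and θ₀ ∈ ℕ with θ₀ ≥ 1, and let L be a C¹ map from the punctured closed unit disk { x ∈ ℝ² : 0 < |x| ≤ 1 } into ℝ^N. Then θ₀² ∫_{B₁(0)} |x|^{2(θ₀−1)} |L(x)|² dx ≤ ∫_{B₁(0)} |x|^{2θ₀} |∇L(x)|² dx + θ₀ ∫_{∂B₁(0)} |L|² dσ, where the inequality is understood in [0, ∞]. -/
open MeasureTheory Metric Complex Set Real Filter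


set_option maxHeartbeats 3000000 in
lemma hardy_slice (N : ℕ) (θ₀ : ℕ) (hθ : 1 ≤ θ₀)
    (L : ℂ → Fin N → ℝ)
    (hL : ContDiffOn ℝ 1 L {x : ℂ | x ≠ 0 ∧ ‖x‖ ≤ 1}) (v : ℂ) (hv : ‖v‖ = 1) :
    (θ₀ : ENNReal) ^ 2 *
        ∫⁻ r in Ioo (0:ℝ) 1, ENNReal.ofReal (r ^ (2*θ₀-1) * ∑ k, (L ((r:ℂ) * v) k) ^ 2)
      ≤ (∫⁻ r in Ioo (0:ℝ) 1,
            ENNReal.ofReal (r ^ (2*θ₀+1) * ∑ k, ‖fderiv ℝ (fun y => L y k) ((r:ℂ) * v)‖ ^ 2))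
        + (θ₀ : ENNReal) * ENNReal.ofReal (∑ k, (L v k) ^ 2) := by
  set S : Set ℂ := {x : ℂ | x ≠ 0 ∧ ‖x‖ ≤ 1} with hS
  set U : Set ℂ := {x : ℂ | x ≠ 0 ∧ ‖x‖ < 1} with hU
  have hUopen : IsOpen U := by
    have : U = {(0:ℂ)}ᶜ ∩ ball (0:ℂ) 1 := by
      ext x; simp [hU, mem_ball_zero_iff, and_comm]
    rw [this]; exact isOpen_compl_singleton.inter isOpen_ball
  have hUS : U ⊆ S := fun x hx => ⟨hx.1, hx.2.le⟩
  have hUnhds : ∀ x ∈ U, S ∈ nhds x := fun x hx =>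
    Filter.mem_of_superset (hUopen.mem_nhds hx) hUS
  have hLk : ∀ k, ContDiffOn ℝ 1 (fun y => L y k) S := fun k => contDiffOn_pi.1 hL k
  have hdiff : ∀ (k) (x), x ∈ U → DifferentiableAt ℝ (fun y => L y k) x := fun k x hx =>
    ((hLk k).contDiffAt (hUnhds x hx)).differentiableAt one_ne_zero
  have hvne : v ≠ 0 := by intro h; rw [h] at hv; simp at hv
  -- the curve
  set γ : ℝ → ℂ := fun r => (r:ℝ) • v with hγdef
  have hγc : ∀ r : ℝ, γ r = (r:ℂ) * v := fun r => Complex.real_smul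
  have hγnorm : ∀ r : ℝ, ‖γ r‖ = |r| := by
    intro r; rw [hγdef]; simp [norm_smul, hv]
  have hγmem : ∀ r ∈ Ioo (0:ℝ) 1, γ r ∈ U := by
    intro r hr
    refine ⟨?_, ?_⟩
    · rw [hγc]
      exact mul_ne_zero (Complex.ofReal_ne_zero.2 hr.1.ne') hvne
    · rw [hγnorm, abs_of_pos hr.1]; exact hr.2
  have hγderiv : ∀ r : ℝ, HasDerivAt γ v r := by
    intro r
    exact ((hasDerivAt_id r).smul_const v).congr_deriv (one_smul ℝ v)
  set φ : Fin N → ℝ → ℝ := fun k r => L (γ r) k with hφdef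
  set d : Fin N → ℝ → ℝ := fun k r => (fderiv ℝ (fun y => L y k) (γ r)) v with hddef
  have hφderiv : ∀ (k) (r), r ∈ Ioo (0:ℝ) 1 → HasDerivAt (φ k) (d k r) r := by
    intro k r hr
    exact ((hdiff k _ (hγmem r hr)).hasFDerivAt).comp_hasDerivAt r (hγderiv r)
  set u : ℝ → ℝ := fun r => ∑ k, (φ k r)^2 with hudef
  set u' : ℝ → ℝ := fun r => ∑ k, 2 * φ k r * d k r with hu'def
  have huderiv : ∀ r ∈ Ioo (0:ℝ) 1, HasDerivAt u (u' r) r := by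
    intro r hr
    refine HasDerivAt.fun_sum fun k _ => ?_
    simpa [mul_comm] using ((hφderiv k r hr).fun_pow 2)
  set G : ℝ → ℝ := fun r => ∑ k, ‖fderiv ℝ (fun y => L y k) (γ r)‖^2 with hGdef
  have hu_nonneg : ∀ r, 0 ≤ u r := fun r => Finset.sum_nonneg fun k _ => sq_nonneg _
  have hG_nonneg : ∀ r, 0 ≤ G r := fun r => Finset.sum_nonneg fun k _ => sq_nonneg _
  have hCS : ∀ r, (u' r)^2 ≤ 4 * (u r * G r) := by
    intro r
    have h1 : u' r = 2 * ∑ k, φ k r * d k r := by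
      rw [hu'def, Finset.mul_sum]
      exact Finset.sum_congr rfl fun k _ => by ring
    have h2 : (∑ k, φ k r * d k r)^2 ≤ (∑ k, (φ k r)^2) * ∑ k, (d k r)^2 :=
      Finset.sum_mul_sq_le_sq_mul_sq _ _ _
    have h3 : ∑ k, (d k r)^2 ≤ G r := by
      refine Finset.sum_le_sum fun k _ => ?_
      have := (fderiv ℝ (fun y => L y k) (γ r)).le_opNorm v
      rw [hv, mul_one] at this
      have h4 : |d k r| ≤ ‖fderiv ℝ (fun y => L y k) (γ r)‖ := by
        rw [hddef, ← Real.norm_eq_abs]; exact this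
      calc (d k r)^2 = |d k r|^2 := (_root_.sq_abs _).symm
        _ ≤ _ := by
            apply pow_le_pow_left₀ (abs_nonneg _) h4
    calc (u' r)^2 = 4 * (∑ k, φ k r * d k r)^2 := by rw [h1]; ring
      _ ≤ 4 * ((∑ k, (φ k r)^2) * ∑ k, (d k r)^2) := by linarith
      _ ≤ 4 * (u r * G r) := by
          have := mul_le_mul_of_nonneg_left h3 (hu_nonneg r)
          nlinarith [hu_nonneg r]
  -- continuity facts
  have hγcont : Continuous γ := by
    rw [hγdef]; exact (continuous_id.smul continuous_const)
  have hγmemS : ∀ r ∈ Ioc (0:ℝ) 1, γ r ∈ S := by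
    intro r hr
    refine ⟨?_, ?_⟩
    · rw [hγc]; exact mul_ne_zero (Complex.ofReal_ne_zero.2 hr.1.ne') hvne
    · rw [hγnorm, abs_of_pos hr.1]; exact hr.2
  have hφcont : ∀ k, ContinuousOn (φ k) (Ioc (0:ℝ) 1) := by
    intro k
    exact ((hLk k).continuousOn).comp hγcont.continuousOn hγmemS
  have hucont : ContinuousOn u (Ioc (0:ℝ) 1) := by
    rw [hudef]
    exact continuousOn_finset_sum _ fun k _ => (hφcont k).pow 2
  have hfdcont : ∀ k, ContinuousOn (fun r => fderiv ℝ (fun y => L y k) (γ r)) (Ioo (0:ℝ) 1) := by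
    intro k
    exact (((hLk k).mono hUS).continuousOn_fderiv_of_isOpen hUopen le_rfl).comp
      hγcont.continuousOn hγmem
  have hdcont : ∀ k, ContinuousOn (d k) (Ioo (0:ℝ) 1) := by
    intro k
    have happ : Continuous fun A : ℂ →L[ℝ] ℝ => A v :=
      (ContinuousLinearMap.apply ℝ ℝ v).continuous
    exact happ.comp_continuousOn (hfdcont k)
  have hGcont : ContinuousOn G (Ioo (0:ℝ) 1) := by
    rw [hGdef]
    exact continuousOn_finset_sum _ fun k _ => ((hfdcont k).norm.pow 2)
  have hu'cont : ContinuousOn u' (Ioo (0:ℝ) 1) := by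
    rw [hu'def]
    refine continuousOn_finset_sum _ fun k _ => ?_
    exact (continuousOn_const.mul ((hφcont k).mono Ioo_subset_Ioc_self)).mul (hdcont k)
  -- the window inequality
  set m : ℕ := 2*θ₀ - 1 with hm
  have hm1 : m + 1 = 2*θ₀ := by omega
  have key : ∀ δ : ℝ, 0 < δ → δ < 1/2 →
      (θ₀ : ENNReal)^2 * ∫⁻ r in Ioo δ (1-δ), ENNReal.ofReal (r ^ m * u r)
        ≤ (∫⁻ r in Ioo (0:ℝ) 1, ENNReal.ofReal (r ^ (m+2) * G r))
          + (θ₀ : ENNReal) * ENNReal.ofReal (u (1-δ)) := by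
    intro δ hδ0 hδ2
    set a : ℝ := δ with ha
    set b : ℝ := 1 - δ with hb
    have hab : a ≤ b := by rw [ha, hb]; linarith
    have hb1 : b < 1 := by rw [hb]; linarith
    have hsubI : Icc a b ⊆ Ioo (0:ℝ) 1 := fun r hr =>
      ⟨lt_of_lt_of_le hδ0 hr.1, lt_of_le_of_lt hr.2 hb1⟩
    set w : ℝ → ℝ := fun r => r ^ (m+1) * u r with hwdef
    set w' : ℝ → ℝ := fun r => ((m:ℝ)+1) * r ^ m * u r + r ^ (m+1) * u' r with hw'def
    have hw : ∀ r ∈ Icc a b, HasDerivAt w (w' r) r := by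
      intro r hr
      have h1 := (hasDerivAt_pow (m+1) r).mul (huderiv r (hsubI hr))
      simp [hw'def, hwdef] at h1; exact h1
    -- pointwise inequality
    have hptwise : ∀ r ∈ Icc a b,
        (θ₀:ℝ)^2 * (r ^ m * u r) ≤ (θ₀:ℝ) * w' r + r ^ (m+2) * G r := by
      intro r hr
      have hr' : r ∈ Ioo (0:ℝ) 1 := hsubI hr
      have hrpos : (0:ℝ) < r := hr'.1
      have hCSr := hCS r
      have hsq : Real.sqrt (u r) ^ 2 = u r := Real.sq_sqrt (hu_nonneg r)
      have hsqG : Real.sqrt (G r) ^ 2 = G r := Real.sq_sqrt (hG_nonneg r)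
      have hsnn : (0:ℝ) ≤ 2 * Real.sqrt (u r) * Real.sqrt (G r) := by positivity
      have hub : -(2 * Real.sqrt (u r) * Real.sqrt (G r)) ≤ u' r := by
        nlinarith [hCSr, hsq, hsqG, hsnn, sq_nonneg (u' r + 2 * Real.sqrt (u r) * Real.sqrt (G r)),
          sq_nonneg (u' r - 2 * Real.sqrt (u r) * Real.sqrt (G r))]
      have base : (0:ℝ) ≤ (θ₀:ℝ)^2 * u r + (θ₀:ℝ) * (r * u' r) + r^2 * G r := by
        have hθ1 : (1:ℝ) ≤ (θ₀:ℝ) := by exact_mod_cast hθ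
        nlinarith [sq_nonneg ((θ₀:ℝ) * Real.sqrt (u r) - r * Real.sqrt (G r)), hsq, hsqG,
          mul_le_mul_of_nonneg_left hub (mul_nonneg (by linarith : (0:ℝ) ≤ (θ₀:ℝ)) hrpos.le)]
      have hpm : (0:ℝ) ≤ r ^ m := pow_nonneg hrpos.le _
      have e1 : r^(m+1) = r^m * r := pow_succ r m
      have e2 : r^(m+2) = r^m * r^2 := by rw [pow_add]
      have hcast : ((m:ℝ)+1) = 2*(θ₀:ℝ) := by
        rw [show ((m:ℝ)+1) = ((m+1 : ℕ) : ℝ) by push_cast; ring, hm1]; push_cast; ring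
      rw [hw'def]
      simp only []
      rw [e1, e2, hcast]
      nlinarith [mul_nonneg hpm base]
    -- integrability
    have hucontI : ContinuousOn u (Icc a b) := hucont.mono fun r hr =>
      ⟨(hsubI hr).1, (hsubI hr).2.le⟩
    have hGcontI : ContinuousOn G (Icc a b) := hGcont.mono hsubI
    have hu'contI : ContinuousOn u' (Icc a b) := hu'cont.mono hsubI
    have hw'cont : ContinuousOn w' (Icc a b) := by
      rw [hw'def]
      exact ((continuousOn_const.mul (continuous_pow m).continuousOn).mul hucontI).add
        ((continuous_pow (m+1)).continuousOn.mul hu'contI)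
    have hf1cont : ContinuousOn (fun r : ℝ => (θ₀:ℝ)^2 * (r ^ m * u r)) (Icc a b) :=
      continuousOn_const.mul ((continuous_pow m).continuousOn.mul hucontI)
    have hGtermcont : ContinuousOn (fun r : ℝ => r ^ (m+2) * G r) (Icc a b) :=
      (continuous_pow (m+2)).continuousOn.mul hGcontI
    have hrhscont : ContinuousOn (fun r : ℝ => (θ₀:ℝ) * w' r + r ^ (m+2) * G r) (Icc a b) :=
      (continuousOn_const.mul hw'cont).add hGtermcont
    have hint_w' : IntervalIntegrable w' volume a b := hw'cont.intervalIntegrable_of_Icc hab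
    have hint_f1 : IntervalIntegrable (fun r : ℝ => (θ₀:ℝ)^2 * (r ^ m * u r)) volume a b :=
      hf1cont.intervalIntegrable_of_Icc hab
    have hint_Gt : IntervalIntegrable (fun r : ℝ => r ^ (m+2) * G r) volume a b :=
      hGtermcont.intervalIntegrable_of_Icc hab
    have hint_rhs : IntervalIntegrable (fun r : ℝ => (θ₀:ℝ) * w' r + r ^ (m+2) * G r) volume a b :=
      hrhscont.intervalIntegrable_of_Icc hab
    have hFTC : ∫ r in a..b, w' r = w b - w a :=
      intervalIntegral.integral_eq_sub_of_hasDerivAt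
        (fun r hr => hw r (by rwa [Set.uIcc_of_le hab] at hr)) hint_w'
    have hmono : ∫ r in a..b, (θ₀:ℝ)^2 * (r ^ m * u r) ≤
        ∫ r in a..b, ((θ₀:ℝ) * w' r + r ^ (m+2) * G r) :=
      intervalIntegral.integral_mono_on hab hint_f1 hint_rhs hptwise
    have hsplit : ∫ r in a..b, ((θ₀:ℝ) * w' r + r ^ (m+2) * G r)
        = (θ₀:ℝ) * (w b - w a) + ∫ r in a..b, r ^ (m+2) * G r := by
      rw [intervalIntegral.integral_add ((hint_w').const_mul _) hint_Gt,
        intervalIntegral.integral_const_mul, hFTC]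
    have hwb : (θ₀:ℝ) * (w b - w a) ≤ (θ₀:ℝ) * u b := by
      apply mul_le_mul_of_nonneg_left _ (Nat.cast_nonneg θ₀)
      have hwa : 0 ≤ w a := mul_nonneg (pow_nonneg (le_of_lt hδ0) _) (hu_nonneg a)
      have hwb' : w b ≤ u b := by
        have hb' : b ^ (m+1) ≤ 1 := pow_le_one₀ (by rw [hb]; linarith) hb1.le
        calc w b = b ^ (m+1) * u b := rfl
          _ ≤ 1 * u b := mul_le_mul_of_nonneg_right hb' (hu_nonneg b)
          _ = u b := one_mul _
      linarith
    -- convert lintegrals to integrals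
    have hIoo : ∀ (g : ℝ → ℝ), ContinuousOn g (Icc a b) → (∀ r ∈ Ioo a b, 0 ≤ g r) →
        ∫⁻ r in Ioo a b, ENNReal.ofReal (g r) = ENNReal.ofReal (∫ r in Ioo a b, g r) := by
      intro g hg hgnn
      rw [← ofReal_integral_eq_lintegral_ofReal]
      · exact (hg.integrableOn_Icc).mono_set Ioo_subset_Icc_self
      · exact (ae_restrict_iff' measurableSet_Ioo).2 (Filter.Eventually.of_forall hgnn)
    have hIab : ∫ r in Ioo a b, (θ₀:ℝ)^2 * (r ^ m * u r) = ∫ r in a..b, (θ₀:ℝ)^2 * (r ^ m * u r) := by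
      rw [intervalIntegral.integral_of_le hab, integral_Ioc_eq_integral_Ioo]
    have hmulin : (θ₀ : ENNReal)^2 * ∫⁻ r in Ioo a b, ENNReal.ofReal (r ^ m * u r)
        = ∫⁻ r in Ioo a b, ENNReal.ofReal ((θ₀:ℝ)^2 * (r ^ m * u r)) := by
      rw [← lintegral_const_mul' _ _ (by simp : ((θ₀:ENNReal)^2) ≠ ⊤)]
      congr 1
      ext r
      rw [ENNReal.ofReal_mul (sq_nonneg ((θ₀:ℝ))), ENNReal.ofReal_pow (Nat.cast_nonneg θ₀),
        ENNReal.ofReal_natCast]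
    calc (θ₀ : ENNReal)^2 * ∫⁻ r in Ioo a b, ENNReal.ofReal (r ^ m * u r)
        = ENNReal.ofReal (∫ r in a..b, (θ₀:ℝ)^2 * (r ^ m * u r)) := by
          rw [hmulin, hIoo _ hf1cont (fun r hr => mul_nonneg (sq_nonneg _)
            (mul_nonneg (pow_nonneg (hδ0.trans hr.1).le _) (hu_nonneg r))), hIab]
      _ ≤ ENNReal.ofReal ((θ₀:ℝ) * (w b - w a) + ∫ r in a..b, r ^ (m+2) * G r) := by
          apply ENNReal.ofReal_le_ofReal; rw [← hsplit]; exact hmono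
      _ ≤ ENNReal.ofReal ((∫ r in a..b, r ^ (m+2) * G r) + (θ₀:ℝ) * u b) := by
          apply ENNReal.ofReal_le_ofReal; linarith
      _ ≤ ENNReal.ofReal (∫ r in a..b, r ^ (m+2) * G r) + ENNReal.ofReal ((θ₀:ℝ) * u b) :=
          ENNReal.ofReal_add_le
      _ ≤ (∫⁻ r in Ioo (0:ℝ) 1, ENNReal.ofReal (r ^ (m+2) * G r))
            + (θ₀ : ENNReal) * ENNReal.ofReal (u b) := by
          gcongr
          · rw [show (∫ r in a..b, r ^ (m+2) * G r) = ∫ r in Ioo a b, r ^ (m+2) * G r by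
              rw [intervalIntegral.integral_of_le hab, integral_Ioc_eq_integral_Ioo],
              ← hIoo _ hGtermcont (fun r hr => mul_nonneg (pow_nonneg (hsubI (Ioo_subset_Icc_self hr)).1.le _) (hG_nonneg r))]
            exact lintegral_mono_set (fun r hr => hsubI (Ioo_subset_Icc_self hr))
          · rw [ENNReal.ofReal_mul (Nat.cast_nonneg θ₀), ENNReal.ofReal_natCast]
  -- sequences δₙ → 0
  set δn : ℕ → ℝ := fun n => 1/((n:ℝ)+3) with hδn
  have hδpos : ∀ n, 0 < δn n := fun n => by rw [hδn]; positivity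
  have hδhalf : ∀ n, δn n < 1/2 := by
    intro n
    rw [hδn]
    have h3 : (3:ℝ) ≤ (n:ℝ)+3 := le_add_of_nonneg_left (Nat.cast_nonneg n)
    calc 1/((n:ℝ)+3) ≤ 1/3 := by
          apply one_div_le_one_div_of_le (by norm_num) h3
      _ < 1/2 := by norm_num
  have hδanti : Antitone δn := by
    intro n p hnp
    rw [hδn]
    apply one_div_le_one_div_of_le (by positivity)
    have : (n:ℝ) ≤ (p:ℝ) := Nat.cast_le.2 hnp
    linarith
  have hδtend : Filter.Tendsto δn Filter.atTop (nhds 0) := by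
    rw [hδn]
    simp only [one_div]
    exact Filter.Tendsto.inv_tendsto_atTop
      (Filter.tendsto_atTop_add_const_right _ 3 tendsto_natCast_atTop_atTop)
  -- monotone convergence on the LHS
  have hlim : Filter.Tendsto
      (fun n => ∫⁻ r in Ioo (δn n) (1 - δn n), ENNReal.ofReal (r ^ m * u r))
      Filter.atTop (nhds (∫⁻ r in Ioo (0:ℝ) 1, ENNReal.ofReal (r ^ m * u r))) := by
    set F' : ℝ → ENNReal := fun r => ENNReal.ofReal (r ^ m * u r) with hF'
    have hsubn : ∀ n, Ioo (δn n) (1 - δn n) ⊆ Ioc (0:ℝ) 1 := by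
      intro n r hr
      exact ⟨(hδpos n).trans hr.1, by have h2 := hr.2; have h3 := hδpos n; linarith⟩
    have hmeas : ∀ n, AEMeasurable ((Ioo (δn n) (1 - δn n)).indicator F') volume := by
      intro n
      rw [aemeasurable_indicator_iff measurableSet_Ioo]
      have hc : ContinuousOn F' (Ioo (δn n) (1 - δn n)) :=
        ENNReal.continuous_ofReal.comp_continuousOn
          ((continuous_pow m).continuousOn.mul (hucont.mono (hsubn n)))
      exact hc.aemeasurable measurableSet_Ioo
    have hmono2 : ∀ x, Monotone fun n => (Ioo (δn n) (1 - δn n)).indicator F' x := by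
      intro x n p hnp
      have h1 : δn p ≤ δn n := hδanti hnp
      exact Set.indicator_le_indicator_of_subset
        (Ioo_subset_Ioo h1 (by linarith)) (fun _ => zero_le) x
    have htend2 : ∀ x, Filter.Tendsto (fun n => (Ioo (δn n) (1 - δn n)).indicator F' x)
        Filter.atTop (nhds ((Ioo (0:ℝ) 1).indicator F' x)) := by
      intro x
      by_cases hx : x ∈ Ioo (0:ℝ) 1
      · have h1 : ∀ᶠ n in Filter.atTop, δn n < x := hδtend.eventually (gt_mem_nhds hx.1)
        have h2 : ∀ᶠ n in Filter.atTop, δn n < 1 - x :=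
          hδtend.eventually (gt_mem_nhds (by linarith [hx.2]))
        have hev : ∀ᶠ n in Filter.atTop,
            (Ioo (δn n) (1 - δn n)).indicator F' x = F' x := by
          filter_upwards [h1, h2] with n hn1 hn2
          have hmem : x ∈ Ioo (δn n) (1 - δn n) := ⟨hn1, by linarith⟩
          rw [Set.indicator_of_mem hmem]
        rw [Set.indicator_of_mem hx]
        exact Filter.Tendsto.congr' (hev.mono fun n h => h.symm)
          (tendsto_const_nhds : Filter.Tendsto (fun _ : ℕ => F' x) Filter.atTop (nhds (F' x)))
      · have hev : ∀ n, (Ioo (δn n) (1 - δn n)).indicator F' x = 0 := by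
          intro n
          apply Set.indicator_of_notMem
          intro hmem
          exact hx ⟨(hδpos n).trans hmem.1, by have := hmem.2; have := hδpos n; linarith⟩
        rw [Set.indicator_of_notMem hx]
        simpa [hev] using tendsto_const_nhds (α := ENNReal) (f := Filter.atTop (α := ℕ))
    have h := lintegral_tendsto_of_tendsto_of_monotone hmeas
      (Filter.Eventually.of_forall hmono2) (Filter.Eventually.of_forall htend2)
    simpa [lintegral_indicator measurableSet_Ioo] using h
  -- limits of both sides
  have hA : Filter.Tendsto
      (fun n => (θ₀ : ENNReal)^2 * ∫⁻ r in Ioo (δn n) (1 - δn n), ENNReal.ofReal (r ^ m * u r))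
      Filter.atTop
      (nhds ((θ₀ : ENNReal)^2 * ∫⁻ r in Ioo (0:ℝ) 1, ENNReal.ofReal (r ^ m * u r))) :=
    ENNReal.Tendsto.const_mul hlim (Or.inr (by simp))
  have hu1tend : Filter.Tendsto (fun n => u (1 - δn n)) Filter.atTop (nhds (u 1)) := by
    have hcw : ContinuousWithinAt u (Ioc (0:ℝ) 1) 1 := hucont 1 ⟨one_pos, le_rfl⟩
    apply hcw.tendsto.comp
    rw [tendsto_nhdsWithin_iff]
    constructor
    · have : Filter.Tendsto (fun n => 1 - δn n) Filter.atTop (nhds (1 - 0)) :=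
        tendsto_const_nhds.sub hδtend
      simpa using this
    · exact Filter.Eventually.of_forall fun n => ⟨by linarith [hδhalf n], by linarith [hδpos n]⟩
  have hB : Filter.Tendsto
      (fun n => (∫⁻ r in Ioo (0:ℝ) 1, ENNReal.ofReal (r ^ (m+2) * G r))
        + (θ₀ : ENNReal) * ENNReal.ofReal (u (1 - δn n)))
      Filter.atTop
      (nhds ((∫⁻ r in Ioo (0:ℝ) 1, ENNReal.ofReal (r ^ (m+2) * G r))
        + (θ₀ : ENNReal) * ENNReal.ofReal (u 1))) :=
    Filter.Tendsto.const_add _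
      (ENNReal.Tendsto.const_mul (ENNReal.tendsto_ofReal hu1tend) (Or.inr (by simp)))
  have hfinal := le_of_tendsto_of_tendsto' hA hB fun n => key (δn n) (hδpos n) (hδhalf n)
  -- translate back to the statement
  have hgoalL : (∫⁻ r in Ioo (0:ℝ) 1,
        ENNReal.ofReal (r ^ (2*θ₀-1) * ∑ k, (L ((r:ℂ) * v) k) ^ 2))
      = ∫⁻ r in Ioo (0:ℝ) 1, ENNReal.ofReal (r ^ m * u r) :=
    lintegral_congr fun r => by simp only [hudef, hφdef, hγc, hm]
  have hgoalG : (∫⁻ r in Ioo (0:ℝ) 1,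
        ENNReal.ofReal (r ^ (2*θ₀+1) * ∑ k, ‖fderiv ℝ (fun y => L y k) ((r:ℂ) * v)‖ ^ 2))
      = ∫⁻ r in Ioo (0:ℝ) 1, ENNReal.ofReal (r ^ (m+2) * G r) :=
    lintegral_congr fun r => by
      have he : 2*θ₀+1 = m+2 := by omega
      simp only [hGdef, hγc, he]
  have hgoalB : ENNReal.ofReal (∑ k, (L v k) ^ 2) = ENNReal.ofReal (u 1) := by
    have : γ 1 = v := by rw [hγdef]; simp
    simp only [hudef, hφdef, this]
  rw [hgoalL, hgoalG, hgoalB]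
  exact hfinal



lemma csymm_eq (p : ℝ × ℝ) : Complex.measurableEquivRealProd.symm (polarCoord.symm p)
    = Complex.polarCoord.symm p := by
  rw [Complex.polarCoord_symm_apply, polarCoord_symm_apply]
  simp [Complex.measurableEquivRealProd, Complex.ext_iff, Complex.cos_ofReal_re,
    Complex.sin_ofReal_re]

lemma polar_lintegral (g : ℂ → ENNReal) :
    ∫⁻ x in ball (0:ℂ) 1, g x
      = ∫⁻ p in Ioo (0:ℝ) 1 ×ˢ Ioo (-π) π,
          ENNReal.ofReal p.1 * g (Complex.polarCoord.symm p) := by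
  set T : Set (ℝ × ℝ) := Ioo (0:ℝ) 1 ×ˢ Ioo (-π) π with hT
  have hTtarget : T ⊆ polarCoord.target := by
    rw [hT, polarCoord_target]
    exact Set.prod_mono (Ioo_subset_Ioi_self) le_rfl
  have hTm : MeasurableSet T := measurableSet_Ioo.prod measurableSet_Ioo
  -- the complement of the slit plane is null
  have hnull : volume (Complex.slitPlaneᶜ) = 0 := by
    have h1 : (Complex.slitPlaneᶜ : Set ℂ) ⊆ (LinearMap.ker Complex.imLm : Submodule ℝ ℂ) := by
      intro z hz
      simp only [mem_compl_iff, Complex.mem_slitPlane_iff, not_or, not_lt, not_ne_iff] at hz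
      exact hz.2
    refine measure_mono_null h1 (Measure.addHaar_submodule _ _ ?_)
    intro h
    have h2 : Complex.I ∈ (⊤ : Submodule ℝ ℂ) := trivial
    rw [← h, LinearMap.mem_ker] at h2
    simp [Complex.imLm] at h2
  -- image identity
  have himg : Complex.polarCoord.symm '' T = ball (0:ℂ) 1 ∩ Complex.slitPlane := by
    apply Set.Subset.antisymm
    · rintro z ⟨p, hp, rfl⟩
      constructor
      · rw [mem_ball_zero_iff, Complex.norm_polarCoord_symm,
          abs_of_pos hp.1.1]
        exact hp.1.2
      · exact Complex.polarCoord.map_target (hTtarget hp)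
    · intro z hz
      refine ⟨Complex.polarCoord z, ?_, ?_⟩
      · rw [Complex.polarCoord_apply, hT]
        refine ⟨⟨?_, ?_⟩, ?_, ?_⟩
        · exact norm_pos_iff.mpr (Complex.slitPlane_ne_zero hz.2)
        · exact mem_ball_zero_iff.1 hz.1
        · exact Complex.neg_pi_lt_arg z
        · exact Complex.arg_lt_pi_iff.2 ((Complex.mem_slitPlane_iff.1 hz.2).imp le_of_lt id)
      · exact Complex.polarCoord.left_inv hz.2
  -- the derivative matrix
  set B : ℝ × ℝ → ℝ × ℝ →L[ℝ] ℝ × ℝ := fun p =>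
    LinearMap.toContinuousLinearMap (Matrix.toLin (Module.Basis.finTwoProd ℝ) (Module.Basis.finTwoProd ℝ)
      !![Real.cos p.2, -p.1 * Real.sin p.2; Real.sin p.2, p.1 * Real.cos p.2]) with hB
  have hBderiv : ∀ p ∈ T, HasFDerivWithinAt polarCoord.symm (B p) T p := fun p _ =>
    (hasFDerivAt_polarCoord_symm p).hasFDerivWithinAt
  have hBdet : ∀ p, (B p).det = p.1 := by
    intro p
    conv_rhs => rw [← one_mul p.1, ← Real.cos_sq_add_sin_sq p.2]
    simp only [hB, neg_mul, LinearMap.det_toContinuousLinearMap, LinearMap.det_toLin,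
      Matrix.det_fin_two_of, sub_neg_eq_add]
    ring
  have hinj : Set.InjOn polarCoord.symm T :=
    polarCoord.symm.injOn.mono (by rw [polarCoord.symm_source]; exact hTtarget)
  calc ∫⁻ x in ball (0:ℂ) 1, g x
      = ∫⁻ x in ball (0:ℂ) 1 ∩ Complex.slitPlane, g x := by
        refine (setLIntegral_congr ?_).symm
        rw [ae_eq_set]
        refine ⟨?_, measure_mono_null ?_ hnull⟩
        · rw [diff_eq_empty.2 inter_subset_left]
          exact measure_empty
        · intro z hz
          exact fun h => hz.2 ⟨hz.1, h⟩
    _ = ∫⁻ x in Complex.measurableEquivRealProd.symm '' (polarCoord.symm '' T), g x := by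
        rw [Set.image_image]
        rw [show ((fun p => Complex.measurableEquivRealProd.symm (polarCoord.symm p)) '' T)
          = Complex.polarCoord.symm '' T from by
            apply Set.image_congr; intro p _; exact csymm_eq p]
        rw [himg]
    _ = ∫⁻ q in polarCoord.symm '' T, g (Complex.measurableEquivRealProd.symm q) := by
        rw [(Complex.volume_preserving_equiv_real_prod.symm).setLIntegral_comp_emb
          Complex.measurableEquivRealProd.symm.measurableEmbedding g (polarCoord.symm '' T)]
    _ = ∫⁻ p in T, ENNReal.ofReal |(B p).det|
          * g (Complex.measurableEquivRealProd.symm (polarCoord.symm p)) := by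
        rw [lintegral_image_eq_lintegral_abs_det_fderiv_mul volume hTm hBderiv hinj]
    _ = ∫⁻ p in T, ENNReal.ofReal p.1 * g (Complex.polarCoord.symm p) := by
        apply setLIntegral_congr_fun hTm
        intro p hp
        beta_reduce
        rw [hBdet, abs_of_pos hp.1.1, csymm_eq]

lemma polar_iterated (g : ℂ → ENNReal)
    (hg : AEMeasurable (fun p : ℝ × ℝ => ENNReal.ofReal p.1 * g (Complex.polarCoord.symm p))
      ((volume.restrict (Ioo (0:ℝ) 1)).prod (volume.restrict (Ioo (-π) π)))) :
    ∫⁻ x in ball (0:ℂ) 1, g x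
      = ∫⁻ θ in Ioo (-π) π, ∫⁻ r in Ioo (0:ℝ) 1,
          ENNReal.ofReal r * g (Complex.polarCoord.symm (r, θ)) := by
  rw [polar_lintegral g]
  rw [show (volume : Measure (ℝ × ℝ)).restrict (Ioo (0:ℝ) 1 ×ˢ Ioo (-π) π)
      = ((volume.restrict (Ioo (0:ℝ) 1)).prod (volume.restrict (Ioo (-π) π))) from by
    rw [Measure.prod_restrict, ← Measure.volume_eq_prod]]
  exact lintegral_prod_symm _ hg

set_option maxHeartbeats 1000000 in
theorem stmt14 (N : ℕ) (hN : 1 ≤ N) (θ₀ : ℕ) (hθ : 1 ≤ θ₀)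
    (L : ℂ → Fin N → ℝ)
    (hL : ContDiffOn ℝ 1 L {x : ℂ | x ≠ 0 ∧ ‖x‖ ≤ 1}) :
    (θ₀ : ENNReal) ^ 2 *
        ∫⁻ x in ball (0 : ℂ) 1,
          ENNReal.ofReal (‖x‖ ^ (2 * (θ₀ - 1)) * ∑ k, (L x k) ^ 2)
      ≤ (∫⁻ x in ball (0 : ℂ) 1,
            ENNReal.ofReal
              (‖x‖ ^ (2 * θ₀) * ∑ k, ‖fderiv ℝ (fun y => L y k) x‖ ^ 2))
        + (θ₀ : ENNReal) *
            ∫⁻ θ in Set.Ioc (0 : ℝ) (2 * Real.pi),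
              ENNReal.ofReal (∑ k, (L (Complex.exp ((θ : ℂ) * Complex.I)) k) ^ 2) := by
  set g₁ : ℂ → ENNReal :=
    fun x => ENNReal.ofReal (‖x‖ ^ (2 * (θ₀ - 1)) * ∑ k, (L x k) ^ 2) with hg₁def
  set g₂ : ℂ → ENNReal :=
    fun x => ENNReal.ofReal (‖x‖ ^ (2 * θ₀) * ∑ k, ‖fderiv ℝ (fun y => L y k) x‖ ^ 2) with hg₂def
  set bdry : ℝ → ENNReal :=
    fun θ => ENNReal.ofReal (∑ k, (L (Complex.exp ((θ : ℂ) * Complex.I)) k) ^ 2) with hbdef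
  -- continuity of the polar parametrization
  have hCsymmcont : Continuous fun p : ℝ × ℝ => Complex.polarCoord.symm p := by
    simp only [Complex.polarCoord_symm_apply]
    exact (Complex.continuous_ofReal.comp continuous_fst).mul
      ((Complex.continuous_ofReal.comp (Real.continuous_cos.comp continuous_snd)).add
        ((Complex.continuous_ofReal.comp (Real.continuous_sin.comp continuous_snd)).mul
          continuous_const))
  have hecont : Continuous fun θ : ℝ => Complex.exp ((θ:ℂ) * Complex.I) :=
    Complex.continuous_exp.comp (Complex.continuous_ofReal.mul continuous_const)
  have heS : ∀ θ : ℝ, Complex.exp ((θ:ℂ) * Complex.I) ∈ {x : ℂ | x ≠ 0 ∧ ‖x‖ ≤ 1} := fun θ =>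
    ⟨Complex.exp_ne_zero _, by rw [Complex.norm_exp_ofReal_mul_I]⟩
  have hbdrycont : Continuous bdry := by
    rw [hbdef]
    have hsum : Continuous fun θ : ℝ => ∑ k, (L (Complex.exp ((θ:ℂ) * Complex.I)) k) ^ 2 := by
      apply continuous_finset_sum
      intro k _
      exact ((continuous_apply k).comp (hL.continuousOn.comp_continuous hecont heS)).pow 2
    exact ENNReal.continuous_ofReal.comp hsum
  -- measurability
  have hg₂meas : Measurable fun p : ℝ × ℝ =>
      ENNReal.ofReal p.1 * g₂ (Complex.polarCoord.symm p) := by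
    apply Measurable.fun_mul
    · exact measurable_fst.ennreal_ofReal
    · rw [hg₂def]
      apply Measurable.ennreal_ofReal
      apply Measurable.fun_mul
      · exact (hCsymmcont.norm.measurable).pow_const _
      · apply Finset.measurable_sum
        intro k _
        exact (((measurable_fderiv ℝ _).comp hCsymmcont.measurable).norm).pow_const _
  have hmaps : ∀ p ∈ (Ioo (0:ℝ) 1 ×ˢ Ioo (-π) π),
      Complex.polarCoord.symm p ∈ {x : ℂ | x ≠ 0 ∧ ‖x‖ ≤ 1} := by
    intro p hp
    have habs : ‖Complex.polarCoord.symm p‖ = |p.1| := by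
      rw [Complex.norm_polarCoord_symm]
    constructor
    · intro h0
      rw [h0, norm_zero] at habs
      exact absurd (abs_eq_zero.1 habs.symm) hp.1.1.ne'
    · rw [habs, abs_of_pos hp.1.1]; exact hp.1.2.le
  have hg₁meas : AEMeasurable (fun p : ℝ × ℝ =>
      ENNReal.ofReal p.1 * g₁ (Complex.polarCoord.symm p))
      ((volume.restrict (Ioo (0:ℝ) 1)).prod (volume.restrict (Ioo (-π) π))) := by
    rw [Measure.prod_restrict, ← Measure.volume_eq_prod]
    have hf : ContinuousOn (fun p : ℝ × ℝ =>
        ‖Complex.polarCoord.symm p‖ ^ (2*(θ₀-1)) * ∑ k, (L (Complex.polarCoord.symm p) k) ^ 2)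
        (Ioo (0:ℝ) 1 ×ˢ Ioo (-π) π) := by
      apply ContinuousOn.mul
      · exact ((hCsymmcont.norm).pow _).continuousOn
      · apply continuousOn_finset_sum
        intro k _
        exact ((continuous_apply k).comp_continuousOn
          (hL.continuousOn.comp hCsymmcont.continuousOn hmaps)).pow 2
    have h2 : AEMeasurable (fun p : ℝ × ℝ => g₁ (Complex.polarCoord.symm p))
        (volume.restrict (Ioo (0:ℝ) 1 ×ˢ Ioo (-π) π)) := by
      rw [hg₁def]
      exact (ENNReal.continuous_ofReal.comp_continuousOn hf).aemeasurable
        (measurableSet_Ioo.prod measurableSet_Ioo)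
    exact (measurable_fst.ennreal_ofReal.aemeasurable).mul h2
  rw [polar_iterated g₁ hg₁meas, polar_iterated g₂ hg₂meas.aemeasurable]
  -- slicewise inequality
  have hsliceθ : ∀ θ : ℝ,
      (θ₀ : ENNReal)^2 * ∫⁻ r in Ioo (0:ℝ) 1,
          ENNReal.ofReal r * g₁ (Complex.polarCoord.symm (r, θ))
        ≤ (∫⁻ r in Ioo (0:ℝ) 1, ENNReal.ofReal r * g₂ (Complex.polarCoord.symm (r, θ)))
          + (θ₀ : ENNReal) * bdry θ := by
    intro θ
    set v : ℂ := Complex.exp ((θ:ℂ) * Complex.I) with hvdef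
    have hvn : ‖v‖ = 1 := by rw [hvdef, Complex.norm_exp_ofReal_mul_I]
    have hpt : ∀ r : ℝ, Complex.polarCoord.symm (r, θ) = (r:ℂ) * v := fun r => by
      rw [Complex.polarCoord_symm_apply, hvdef, Complex.exp_mul_I,
        ← Complex.ofReal_cos, ← Complex.ofReal_sin]
    have hnorm : ∀ r ∈ Ioo (0:ℝ) 1, ‖(r:ℂ) * v‖ = r := by
      intro r hr
      rw [norm_mul, hvn, mul_one, Complex.norm_real, Real.norm_eq_abs, abs_of_pos hr.1]
    have h1 : (∫⁻ r in Ioo (0:ℝ) 1, ENNReal.ofReal r * g₁ (Complex.polarCoord.symm (r, θ)))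
        = ∫⁻ r in Ioo (0:ℝ) 1, ENNReal.ofReal (r ^ (2*θ₀-1) * ∑ k, (L ((r:ℂ) * v) k) ^ 2) := by
      apply setLIntegral_congr_fun measurableSet_Ioo
      intro r hr
      beta_reduce
      rw [hpt r, hg₁def]
      simp only
      rw [← ENNReal.ofReal_mul hr.1.le]
      congr 1
      rw [hnorm r hr]
      have he : 2*θ₀-1 = 2*(θ₀-1)+1 := by omega
      rw [he, pow_succ]
      ring
    have h2 : (∫⁻ r in Ioo (0:ℝ) 1, ENNReal.ofReal r * g₂ (Complex.polarCoord.symm (r, θ)))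
        = ∫⁻ r in Ioo (0:ℝ) 1, ENNReal.ofReal (r ^ (2*θ₀+1) *
            ∑ k, ‖fderiv ℝ (fun y => L y k) ((r:ℂ) * v)‖ ^ 2) := by
      apply setLIntegral_congr_fun measurableSet_Ioo
      intro r hr
      beta_reduce
      rw [hpt r, hg₂def]
      simp only
      rw [← ENNReal.ofReal_mul hr.1.le]
      congr 1
      rw [hnorm r hr, pow_succ]
      ring
    have h3 : bdry θ = ENNReal.ofReal (∑ k, (L v k) ^ 2) := by rw [hbdef]
    rw [h1, h2, h3]
    exact hardy_slice N θ₀ hθ L hL v hvn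
  -- periodicity of the boundary integrand
  have hper : Function.Periodic bdry (2*π) := by
    intro θ
    rw [hbdef]
    simp only
    have harg : ((θ + 2*π : ℝ) : ℂ) * Complex.I = (θ:ℂ) * Complex.I + 2*(π:ℂ)*Complex.I := by
      push_cast; ring
    rw [harg, Complex.exp_add, Complex.exp_two_pi_mul_I, mul_one]
  have hbfd : ∫⁻ θ in Ioo (-π) π, bdry θ = ∫⁻ θ in Ioc (0:ℝ) (2*π), bdry θ := by
    have h := (isAddFundamentalDomain_Ioc Real.two_pi_pos (-π)).setLIntegral_eq
      (isAddFundamentalDomain_Ioc Real.two_pi_pos 0) bdry hper.map_vadd_zmultiples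
    rw [show -π + 2*π = π by ring, zero_add] at h
    rw [setLIntegral_congr Ioo_ae_eq_Ioc]
    exact h
  -- put everything together
  calc (θ₀ : ENNReal)^2 * ∫⁻ θ in Ioo (-π) π, ∫⁻ r in Ioo (0:ℝ) 1,
          ENNReal.ofReal r * g₁ (Complex.polarCoord.symm (r, θ))
      = ∫⁻ θ in Ioo (-π) π, (θ₀ : ENNReal)^2 * ∫⁻ r in Ioo (0:ℝ) 1,
          ENNReal.ofReal r * g₁ (Complex.polarCoord.symm (r, θ)) :=
        (lintegral_const_mul' _ _ (by simp)).symm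
    _ ≤ ∫⁻ θ in Ioo (-π) π, ((∫⁻ r in Ioo (0:ℝ) 1,
          ENNReal.ofReal r * g₂ (Complex.polarCoord.symm (r, θ)))
          + (θ₀ : ENNReal) * bdry θ) := lintegral_mono fun θ => hsliceθ θ
    _ = (∫⁻ θ in Ioo (-π) π, ∫⁻ r in Ioo (0:ℝ) 1,
          ENNReal.ofReal r * g₂ (Complex.polarCoord.symm (r, θ)))
          + ∫⁻ θ in Ioo (-π) π, (θ₀ : ENNReal) * bdry θ :=
        lintegral_add_right _ (measurable_const.mul hbdrycont.measurable)
    _ = (∫⁻ θ in Ioo (-π) π, ∫⁻ r in Ioo (0:ℝ) 1,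
          ENNReal.ofReal r * g₂ (Complex.polarCoord.symm (r, θ)))
          + (θ₀ : ENNReal) * ∫⁻ θ in Ioc (0:ℝ) (2*π), bdry θ := by
        rw [lintegral_const_mul' _ _ (by simp : (θ₀ : ENNReal) ≠ ⊤), hbfd]
end
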